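/- arXiv:1309.0135 — 8 statements merged into one kernel-verified Lean document; each statement's English description precedes it below -/
import Mathlib

section
/- Let M/k be a field extension and let L and E be intermediate fields of M/k such that E is algebraic over k, M is the compositum L ⊔ E, and M is finite-dimensional over L with f = [M : L]. If L and E are linearly disjoint over k inside M, then E is finite over k and [E : k] = f. -/
set_option maxHeartbeats 800000 in
set_option synthInstance.maxHeartbeats 400000 in
/-- Converse direction of Lemma 1: if `E` is algebraic over `k`, `M = L ⊔ E`, `M` is
finite over `L` of degree `f`, and `L` and `E` are linearly disjoint over `k` inside `M`,
then `E` is finite over `k` and `[E : k] = f`. -/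
theorem stmt_3 {k M : Type*} [Field k] [Field M] [Algebra k M]
    (L E : IntermediateField k M)
    [Algebra.IsAlgebraic k E]
    (hcomp : L ⊔ E = ⊤)
    [FiniteDimensional L M]
    (f : ℕ) (hf : f = Module.finrank L M)
    (hdisj : L.toSubalgebra.LinearDisjoint E.toSubalgebra) :
    FiniteDimensional k E ∧ Module.finrank k E = f := by
  have hadj : Algebra.adjoin (↥L.toSubalgebra) ((E.toSubalgebra : Set M)) = ⊤ := by
    apply Subalgebra.restrictScalars_injective k
    rw [Algebra.restrictScalars_adjoin, Subalgebra.restrictScalars_top]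
    rw [Algebra.adjoin_union, Algebra.adjoin_eq, Algebra.adjoin_eq,
      ← IntermediateField.sup_toSubalgebra_of_isAlgebraic_right, hcomp]
    rfl
  haveI : Module.Free k ↥E.toSubalgebra := Module.Free.of_divisionRing _ _
  haveI : Module.Flat k ↥L.toSubalgebra := Module.Flat.of_free
  have hrank := hdisj.adjoin_rank_eq_rank_right
  rw [hadj] at hrank
  have htop : Module.rank (↥L.toSubalgebra) (⊤ : Subalgebra (↥L.toSubalgebra) M)
      = Module.rank L M :=
    (Subalgebra.topEquiv (R := ↥L.toSubalgebra) (A := M)).toLinearEquiv.rank_eq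
  rw [htop] at hrank
  have hrank' : Module.rank k E = Module.rank L M := hrank.symm
  have hfin : FiniteDimensional k E :=
    Module.rank_lt_aleph0_iff.mp (hrank'.trans_lt (Module.rank_lt_aleph0 L M))
  refine ⟨hfin, ?_⟩
  rw [hf]
  simpa [Module.finrank] using congrArg Cardinal.toNat hrank'
end

section
/- Let k be a field, n ≥ 1, and let v be a valuation on the polynomial ring k[x_1, …, x_n] with values in ℝ≥0 such that v(c) = 1 for every nonzero constant c ∈ k, v(x_i) ≠ 0 for all i, and the values v(x_1), …, v(x_n) are multiplicatively rationally independent. Then for every nonzero f ∈ k[x_1, …, x_n], v(f) = max over the exponent vectors α in the support of f of ∏_i v(x_i)^{α_i}; in particular v(f) ≠ 0 and v is completely determined by its values on the variables. -/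
/-- A valuation on `k[x₁,…,xₙ]` with values in `ℝ≥0` that is `1` on nonzero constants,
nonzero on the variables, and whose values on the variables are multiplicatively
rationally independent, is given on every nonzero polynomial by the maximum of the values
of the monomials in its support; in particular it is nonzero on nonzero polynomials. -/
theorem stmt_5 {k : Type*} [Field k] (n : ℕ) (hn : 1 ≤ n)
    (v : Valuation (MvPolynomial (Fin n) k) NNReal)
    (hC : ∀ c : k, c ≠ 0 → v (MvPolynomial.C c) = 1)
    (hX : ∀ i : Fin n, v (MvPolynomial.X i) ≠ 0)
    (hind : ∀ m : Fin n → ℤ, ∏ i, v (MvPolynomial.X i) ^ m i = 1 → m = 0)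
    (f : MvPolynomial (Fin n) k) (hf : f ≠ 0) :
    v f = f.support.sup' (MvPolynomial.support_nonempty.mpr hf)
        (fun α => ∏ i, v (MvPolynomial.X i) ^ α i) ∧
      v f ≠ 0 := by
  set c : Fin n → NNReal := fun i => v (MvPolynomial.X i) with hc
  set g : (Fin n →₀ ℕ) → NNReal := fun α => ∏ i, c i ^ α i with hg
  have hg0 : ∀ α, g α ≠ 0 := by
    intro α
    simp only [hg, Finset.prod_ne_zero_iff]
    intro i _
    exact pow_ne_zero _ (hX i)
  -- value of a monomial
  have hmon : ∀ (α : Fin n →₀ ℕ) (a : k), a ≠ 0 → v (MvPolynomial.monomial α a) = g α := by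
    intro α a ha
    rw [MvPolynomial.monomial_eq, map_mul, hC a ha, one_mul]
    rw [Finsupp.prod_pow]
    rw [map_prod]
    simp [hg, hc]
  -- g is injective
  have hginj : Function.Injective g := by
    intro α β hab
    have key : ∏ i, c i ^ ((α i : ℤ) - (β i : ℤ)) = 1 := by
      have : ∀ i, c i ^ ((α i : ℤ) - (β i : ℤ)) = c i ^ (α i : ℤ) / c i ^ (β i : ℤ) := by
        intro i; rw [zpow_sub₀ (hX i)]
      rw [Finset.prod_congr rfl fun i _ => this i, Finset.prod_div_distrib]
      have h1 : ∏ i, c i ^ (α i : ℤ) = g α := by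
        simp [hg, zpow_natCast]
      have h2 : ∏ i, c i ^ (β i : ℤ) = g β := by
        simp [hg, zpow_natCast]
      rw [h1, h2, hab, div_self (hg0 β)]
    have := hind _ key
    ext i
    have hi := congrFun this i
    simp only [Pi.zero_apply, sub_eq_zero] at hi
    exact_mod_cast hi
  have hne := MvPolynomial.support_nonempty.mpr hf
  obtain ⟨α0, hα0, hsup⟩ := Finset.exists_mem_eq_sup' hne (fun α => g α)
  have hcoeff : MvPolynomial.coeff α0 f ≠ 0 := MvPolynomial.mem_support_iff.mp hα0
  have hdecomp : f = MvPolynomial.monomial α0 (MvPolynomial.coeff α0 f) +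
      ∑ α ∈ f.support.erase α0, MvPolynomial.monomial α (MvPolynomial.coeff α f) := by
    rw [Finset.add_sum_erase f.support
      (fun α => MvPolynomial.monomial α (MvPolynomial.coeff α f)) hα0]
    exact (MvPolynomial.support_sum_monomial_coeff f).symm
  have hrest : ∀ α ∈ f.support.erase α0,
      v (MvPolynomial.monomial α (MvPolynomial.coeff α f)) < g α0 := by
    intro α hα
    obtain ⟨hne', hmem⟩ := Finset.mem_erase.mp hα
    rw [hmon α _ (MvPolynomial.mem_support_iff.mp hmem)]
    have hle : g α ≤ g α0 := hsup ▸ Finset.le_sup' (fun α => g α) hmem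
    exact lt_of_le_of_ne hle (fun h => hne' (hginj h))
  have hvf : v f = g α0 := by
    rw [hdecomp]
    rw [Valuation.map_add_eq_of_lt_left]
    · exact hmon α0 _ hcoeff
    · rw [hmon α0 _ hcoeff]
      exact v.map_sum_lt (hg0 α0) hrest
  refine ⟨?_, ?_⟩
  · rw [hvf, hsup]
  · rw [hvf]; exact hg0 α0
end

section
/- Let k be a field, n ≥ 1, and let v be a valuation on the formal power series ring k[[x_1, …, x_n]] with values in ℝ≥0 such that v(f) ≤ 1 for every f, and such that the values c_i = v(x_i) satisfy 0 < c_i < 1 for all i and are multiplicatively rationally independent. Then for every nonzero f ∈ k[[x_1, …, x_n]] there is an exponent vector α in the support of f with v(f) = ∏_i c_i^{α_i}, and ∏_i c_i^{β_i} ≤ v(f) for every β in the support of f. In particular v(f) ≠ 0 for all nonzero f. -/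
open MvPowerSeries

/-- tail bound: if all coefficients of total degree `< N` vanish, `v g ≤ C ^ N`. -/
private lemma stmt6_tail {k : Type*} [Field k] {n : ℕ}
    (v : Valuation (MvPowerSeries (Fin n) k) NNReal)
    (hle : ∀ f : MvPowerSeries (Fin n) k, v f ≤ 1)
    (C : NNReal) (hC : ∀ i, v (MvPowerSeries.X i) ≤ C) :
    ∀ (N : ℕ) (g : MvPowerSeries (Fin n) k),
      (∀ β : Fin n →₀ ℕ, (∑ i, β i) < N → MvPowerSeries.coeff β g = 0) →
      v g ≤ C ^ N := by
  classical
  intro N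
  induction N with
  | zero => intro g _; simpa using hle g
  | succ N ih =>
    intro g hg
    set h : Fin n → MvPowerSeries (Fin n) k := fun i β =>
      if (∀ j, j < i → β j = 0) then
        MvPowerSeries.coeff (β + Finsupp.single i 1) g else 0 with hh
    have hcoeffh : ∀ i β, MvPowerSeries.coeff β (h i) =
        if (∀ j, j < i → β j = 0) then
          MvPowerSeries.coeff (β + Finsupp.single i 1) g else 0 := fun i β => rfl
    have hdecomp : g = ∑ i, MvPowerSeries.X i * h i := by
      ext α
      rw [map_sum]
      by_cases hα : α = 0
      · subst hα
        rw [hg 0 (by simp), Finset.sum_eq_zero]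
        intro i _
        rw [MvPowerSeries.X_def, MvPowerSeries.coeff_monomial_mul, if_neg]
        simp [Finsupp.single_le_iff]
      · have hsupp : α.support.Nonempty := Finsupp.support_nonempty_iff.mpr hα
        set i₀ := α.support.min' hsupp with hi₀
        have hi₀mem : i₀ ∈ α.support := α.support.min'_mem hsupp
        have hi₀pos : 1 ≤ α i₀ := Nat.one_le_iff_ne_zero.mpr (Finsupp.mem_support_iff.mp hi₀mem)
        have hle' : Finsupp.single i₀ 1 ≤ α := Finsupp.single_le_iff.mpr hi₀pos
        rw [Finset.sum_eq_single i₀]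
        · rw [MvPowerSeries.X_def, MvPowerSeries.coeff_monomial_mul, if_pos hle', one_mul,
            hcoeffh, if_pos, tsub_add_cancel_of_le hle']
          intro j hj
          have hjns : j ∉ α.support := fun hjm => absurd (α.support.min'_le j hjm) (not_le.mpr hj)
          have hj0 : α j = 0 := Finsupp.notMem_support_iff.mp hjns
          simp [Finsupp.tsub_apply, hj0]
        · intro i _ hne
          rw [MvPowerSeries.X_def, MvPowerSeries.coeff_monomial_mul]
          split_ifs with hle2
          · rw [one_mul, hcoeffh, if_neg]
            push_neg
            have hi : i ∈ α.support := Finsupp.mem_support_iff.mpr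
              (Nat.one_le_iff_ne_zero.mp (Finsupp.single_le_iff.mp hle2))
            have hlt : i₀ < i := (α.support.min'_le i hi).lt_of_ne (Ne.symm hne)
            refine ⟨i₀, hlt, ?_⟩
            have hs : Finsupp.single i 1 i₀ = 0 := by
              rw [Finsupp.single_apply, if_neg (ne_of_gt hlt)]
            rw [Finsupp.tsub_apply, hs, Nat.sub_zero]
            exact Finsupp.mem_support_iff.mp hi₀mem
          · rfl
        · intro hmem; exact absurd (Finset.mem_univ i₀) hmem
    calc v g = v (∑ i, MvPowerSeries.X i * h i) := by rw [← hdecomp]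
      _ ≤ C ^ (N + 1) := by
        refine v.map_sum_le fun i _ => ?_
        rw [map_mul, pow_succ']
        refine mul_le_mul' (hC i) (ih (h i) fun β hβ => ?_)
        rw [hcoeffh]
        split_ifs with hcond
        · refine hg _ ?_
          have : (∑ j, (β + Finsupp.single i 1 : Fin n →₀ ℕ) j) = (∑ j, β j) + 1 := by
            simp only [Finsupp.add_apply, Finset.sum_add_distrib]
            congr 1
            simp [Finsupp.single_apply]
          rw [this]
          omega
        · rfl

private lemma stmt6_prodX {k : Type*} [Field k] {n : ℕ} (α : Fin n →₀ ℕ) :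
    (∏ i, (MvPowerSeries.X i : MvPowerSeries (Fin n) k) ^ α i)
      = MvPowerSeries.monomial α 1 := by
  classical
  simp only [MvPowerSeries.X_pow_eq]
  have key : ∀ s : Finset (Fin n),
      (∏ i ∈ s, MvPowerSeries.monomial (Finsupp.single i (α i)) (1 : k))
        = MvPowerSeries.monomial (∑ i ∈ s, Finsupp.single i (α i)) 1 := by
    intro s
    induction s using Finset.induction with
    | empty => simp [MvPowerSeries.monomial_zero_one]
    | insert _ _ hx ih =>
      rw [Finset.prod_insert hx, Finset.sum_insert hx, ih,
        MvPowerSeries.monomial_mul_monomial, one_mul]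
  rw [key Finset.univ, Finsupp.univ_sum_single α]

private lemma stmt6_vmonomial {k : Type*} [Field k] {n : ℕ}
    (v : Valuation (MvPowerSeries (Fin n) k) NNReal)
    (hle : ∀ f : MvPowerSeries (Fin n) k, v f ≤ 1)
    (α : Fin n →₀ ℕ) {a : k} (ha : a ≠ 0) :
    v (MvPowerSeries.monomial α a) = ∏ i, v (MvPowerSeries.X i) ^ α i := by
  have hvC : v (MvPowerSeries.C a) = 1 := by
    have h1 : v (MvPowerSeries.C a) * v (MvPowerSeries.C a⁻¹) = 1 := by
      rw [← map_mul, ← map_mul, mul_inv_cancel₀ ha, map_one, map_one]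
    refine le_antisymm (hle _) ?_
    calc (1 : NNReal) = v (MvPowerSeries.C a) * v (MvPowerSeries.C a⁻¹) :=
          h1.symm
      _ ≤ v (MvPowerSeries.C a) * 1 := mul_le_mul' le_rfl (hle _)
      _ = v (MvPowerSeries.C a) := mul_one _
  have hsplit : MvPowerSeries.monomial α a
      = MvPowerSeries.C a * MvPowerSeries.monomial α 1 := by
    rw [← MvPowerSeries.monomial_zero_eq_C_apply, MvPowerSeries.monomial_mul_monomial,
      zero_add, mul_one]
  rw [hsplit, map_mul, hvC, one_mul, ← stmt6_prodX, map_prod]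
  simp [map_pow]

/-- For a valuation `v ≤ 1` on `k[[x₁,…,xₙ]]` with `0 < v(xᵢ) < 1` multiplicatively
rationally independent, the value of every nonzero power series is attained by a monomial
of its support and dominates the value of every monomial of its support; in particular
`v(f) ≠ 0` for `f ≠ 0`. -/
theorem stmt_6 {k : Type*} [Field k] (n : ℕ) (hn : 1 ≤ n)
    (v : Valuation (MvPowerSeries (Fin n) k) NNReal)
    (hle : ∀ f : MvPowerSeries (Fin n) k, v f ≤ 1)
    (hpos : ∀ i : Fin n, 0 < v (MvPowerSeries.X i))
    (hlt : ∀ i : Fin n, v (MvPowerSeries.X i) < 1)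
    (hind : ∀ m : Fin n → ℤ, ∏ i, v (MvPowerSeries.X i) ^ m i = 1 → m = 0)
    (f : MvPowerSeries (Fin n) k) (hf : f ≠ 0) :
    (∃ α : Fin n →₀ ℕ, MvPowerSeries.coeff α f ≠ 0 ∧
        v f = ∏ i, v (MvPowerSeries.X i) ^ α i) ∧
      (∀ β : Fin n →₀ ℕ, MvPowerSeries.coeff β f ≠ 0 →
        ∏ i, v (MvPowerSeries.X i) ^ β i ≤ v f) ∧
      v f ≠ 0 := by
  classical
  set c : Fin n → NNReal := fun i => v (MvPowerSeries.X i) with hc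
  have hcne : ∀ i, c i ≠ 0 := fun i => (hpos i).ne'
  -- injectivity of α ↦ ∏ c^α
  have hinj : ∀ α β : Fin n →₀ ℕ, (∏ i, c i ^ α i) = (∏ i, c i ^ β i) → α = β := by
    intro α β hEq
    have hz : ∏ i, c i ^ ((α i : ℤ) - (β i : ℤ)) = 1 := by
      have hrw : ∏ i, c i ^ ((α i : ℤ) - (β i : ℤ))
          = (∏ i, c i ^ (α i)) / (∏ i, c i ^ (β i)) := by
        rw [← Finset.prod_div_distrib]
        refine Finset.prod_congr rfl fun i _ => ?_
        rw [zpow_sub₀ (hcne i), zpow_natCast, zpow_natCast]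
      rw [hrw, hEq, div_self]
      exact Finset.prod_ne_zero_iff.mpr fun i _ => pow_ne_zero _ (hcne i)
    have hm := hind _ hz
    ext i
    have := congrFun hm i
    simp only [Pi.zero_apply, sub_eq_zero] at this
    exact_mod_cast this
  -- nonemptiness of Fin n
  have hne : Nonempty (Fin n) := ⟨⟨0, hn⟩⟩
  have huniv : (Finset.univ : Finset (Fin n)).Nonempty := Finset.univ_nonempty
  -- the max of the values of the variables
  set C : NNReal := Finset.univ.sup' huniv c with hCdef
  have hCle : ∀ i, c i ≤ C := fun i => Finset.le_sup' c (Finset.mem_univ i)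
  have hClt1 : C < 1 := (Finset.sup'_lt_iff huniv).mpr fun i _ => hlt i
  have hCpos : 0 < C := lt_of_lt_of_le (hpos ⟨0, hn⟩) (hCle _)
  -- the value of any monomial is at most C ^ degree
  have hbound : ∀ α : Fin n →₀ ℕ, (∏ i, c i ^ α i) ≤ C ^ (∑ i, α i) := by
    intro α
    rw [← Finset.prod_pow_eq_pow_sum]
    exact Finset.prod_le_prod' fun i _ => pow_le_pow_left' (hCle i) _
  -- positivity of monomial values
  have hval_pos : ∀ α : Fin n →₀ ℕ, 0 < ∏ i, c i ^ α i :=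
    fun α => Finset.prod_pos fun i _ => pow_pos (hpos i) _
  -- finiteness of bounded-degree sets
  have hfinN : ∀ N : ℕ, Set.Finite {α : Fin n →₀ ℕ | (∑ i, α i) < N} := by
    intro N
    have hfin0 : Set.Finite (Set.pi Set.univ fun _ : Fin n => Set.Iio N) :=
      Set.Finite.pi fun _ => Set.finite_Iio N
    have hsub : {α : Fin n →₀ ℕ | (∑ i, α i) < N} ⊆
        (fun (α : Fin n →₀ ℕ) => (α : Fin n → ℕ)) ⁻¹' (Set.pi Set.univ fun _ => Set.Iio N) := by
      intro α hα
      intro i _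
      exact lt_of_le_of_lt (Finset.single_le_sum (fun j _ => Nat.zero_le _) (Finset.mem_univ i)) hα
    exact (Set.Finite.preimage (Function.Injective.injOn (DFunLike.coe_injective (F := Fin n →₀ ℕ))) hfin0).subset hsub
  -- pick a nonzero coefficient
  obtain ⟨α₁, hα₁⟩ : ∃ α, MvPowerSeries.coeff α f ≠ 0 := by
    by_contra hcon; push_neg at hcon
    exact hf (MvPowerSeries.ext fun α => by simp [hcon α])
  set ε : NNReal := ∏ i, c i ^ α₁ i with hεdef
  have hεpos : 0 < ε := hval_pos α₁
  -- the set of support elements with value ≥ ε is finite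
  obtain ⟨N₀, hN₀⟩ := NNReal.exists_pow_lt_of_lt_one hεpos hClt1
  set T : Set (Fin n →₀ ℕ) :=
    {α | MvPowerSeries.coeff α f ≠ 0 ∧ ε ≤ ∏ i, c i ^ α i} with hTdef
  have hTfin : T.Finite := by
    refine (hfinN N₀).subset ?_
    intro α ⟨_, hεα⟩
    simp only [Set.mem_setOf_eq]
    by_contra hge
    push_neg at hge
    have : (∏ i, c i ^ α i) < ε :=
      lt_of_le_of_lt (le_trans (hbound α) (pow_le_pow_right_of_le_one' hClt1.le hge)) hN₀
    exact absurd hεα (not_le.mpr this)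
  have hα₁T : α₁ ∈ hTfin.toFinset := by
    rw [Set.Finite.mem_toFinset]
    exact ⟨hα₁, le_rfl⟩
  obtain ⟨α₀, hα₀mem, hα₀max⟩ :=
    Finset.exists_max_image hTfin.toFinset (fun α => ∏ i, c i ^ α i) ⟨α₁, hα₁T⟩
  rw [Set.Finite.mem_toFinset] at hα₀mem
  obtain ⟨hα₀ne, hα₀ε⟩ := hα₀mem
  set M : NNReal := ∏ i, c i ^ α₀ i with hMdef
  have hMpos : 0 < M := hval_pos α₀
  -- M dominates the value of every support monomial
  have hM : ∀ β : Fin n →₀ ℕ, MvPowerSeries.coeff β f ≠ 0 → (∏ i, c i ^ β i) ≤ M := by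
    intro β hβ
    by_cases hβε : ε ≤ ∏ i, c i ^ β i
    · exact hα₀max β (Set.Finite.mem_toFinset hTfin |>.mpr ⟨hβ, hβε⟩)
    · exact le_trans (not_le.mp hβε).le (le_trans hα₀ε (le_refl M))
  -- pick N with C ^ N < M and decompose f
  obtain ⟨N, hN⟩ := NNReal.exists_pow_lt_of_lt_one hMpos hClt1
  have hα₀deg : (∑ i, α₀ i) < N := by
    by_contra hge
    push_neg at hge
    exact absurd (lt_of_le_of_lt
      (le_trans (hbound α₀) (pow_le_pow_right_of_le_one' hClt1.le hge)) hN) (lt_irrefl M)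
  set Sset : Set (Fin n →₀ ℕ) :=
    {α | (∑ i, α i) < N ∧ MvPowerSeries.coeff α f ≠ 0} with hSdef
  have hSfin : Sset.Finite := (hfinN N).subset fun α hα => hα.1
  set Sf : Finset (Fin n →₀ ℕ) := hSfin.toFinset with hSfdef
  have hmemSf : ∀ α, α ∈ Sf ↔ (∑ i, α i) < N ∧ MvPowerSeries.coeff α f ≠ 0 := by
    intro α; rw [Set.Finite.mem_toFinset]; rfl
  have hα₀Sf : α₀ ∈ Sf := (hmemSf α₀).mpr ⟨hα₀deg, hα₀ne⟩
  set P : MvPowerSeries (Fin n) k :=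
    ∑ α ∈ Sf, MvPowerSeries.monomial α (MvPowerSeries.coeff α f) with hPdef
  -- the tail has small value
  have htail : v (f - P) ≤ C ^ N := by
    refine stmt6_tail v hle C hCle N (f - P) fun β hβ => ?_
    have hcoeffP : MvPowerSeries.coeff β P
        = if β ∈ Sf then MvPowerSeries.coeff β f else 0 := by
      rw [hPdef, map_sum]
      rw [Finset.sum_congr rfl fun α _ => MvPowerSeries.coeff_monomial β α _]
      exact Finset.sum_ite_eq Sf β _
    rw [map_sub, hcoeffP]
    by_cases hβf : MvPowerSeries.coeff β f = 0
    · simp [hβf]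
    · rw [if_pos ((hmemSf β).mpr ⟨hβ, hβf⟩), sub_self]
  -- value of P is M
  have hvP : v P = M := by
    have hsplit : P = MvPowerSeries.monomial α₀ (MvPowerSeries.coeff α₀ f)
        + ∑ α ∈ Sf.erase α₀, MvPowerSeries.monomial α (MvPowerSeries.coeff α f) :=
      (Finset.add_sum_erase Sf _ hα₀Sf).symm
    have hvmono : v (MvPowerSeries.monomial α₀ (MvPowerSeries.coeff α₀ f)) = M :=
      stmt6_vmonomial v hle α₀ hα₀ne
    have hrest : v (∑ α ∈ Sf.erase α₀, MvPowerSeries.monomial α (MvPowerSeries.coeff α f))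
        < M := by
      refine v.map_sum_lt hMpos.ne' fun α hα => ?_
      have hαSf := Finset.mem_of_mem_erase hα
      have hαne0 := ((hmemSf α).mp hαSf).2
      rw [stmt6_vmonomial v hle α hαne0]
      refine lt_of_le_of_ne (hM α hαne0) fun hEqM => ?_
      exact absurd (hinj α α₀ hEqM) (Finset.ne_of_mem_erase hα)
    rw [hsplit, v.map_add_eq_of_lt_left (by rw [hvmono]; exact hrest), hvmono]
  have hvf : v f = M := by
    have : f = P + (f - P) := by ring
    rw [this, v.map_add_eq_of_lt_left, hvP]
    rw [hvP]
    exact lt_of_le_of_lt htail hN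
  refine ⟨⟨α₀, hα₀ne, by rw [hvf]⟩, fun β hβ => ?_, by rw [hvf]; exact hMpos.ne'⟩
  rw [hvf]
  exact hM β hβ
end

section
/- Let k be a field, n ≥ 1, and let K be the fraction field of the formal power series ring k[[x_1, …, x_n]]. Let v be a valuation on K with values in ℝ≥0 such that v is at most 1 on (the image in K of) every element of k[[x_1, …, x_n]], and the values c_i = v(x_i) satisfy 0 < c_i < 1 and are multiplicatively rationally independent. Let O_v = {x ∈ K : v(x) ≤ 1} be the valuation subring of v and m_v its maximal ideal. Then the ring homomorphism k → O_v/m_v induced by including k as constants is bijective; that is, the residue field of v is isomorphic to k via the natural map. -/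
set_option maxHeartbeats 1000000
set_option synthInstance.maxHeartbeats 400000
open MvPowerSeries

theorem aux_prod_X_pow {σ R : Type*} [CommRing R] [Fintype σ] (α : σ →₀ ℕ) :
    (∏ i, (MvPowerSeries.X i : MvPowerSeries σ R) ^ α i) = MvPowerSeries.monomial α 1 := by
  classical
  have h : ∀ s : Finset σ, (∏ i ∈ s, (MvPowerSeries.X i : MvPowerSeries σ R) ^ α i)
      = MvPowerSeries.monomial (∑ i ∈ s, Finsupp.single i (α i)) 1 := by
    intro s
    induction s using Finset.induction with
    | empty => simp [MvPowerSeries.monomial_zero_one]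
    | insert _ _ hx ih =>
      rw [Finset.prod_insert hx, Finset.sum_insert hx, ih, X_pow_eq,
        monomial_mul_monomial, one_mul]
  rw [h, Finsupp.univ_sum_single]

theorem aux_small {k : Type*} [Field k] {n : ℕ} {K : Type*} [Field K]
    [Algebra (MvPowerSeries (Fin n) k) K] (v : Valuation K NNReal)
    (hle : ∀ f : MvPowerSeries (Fin n) k, v (algebraMap _ K f) ≤ 1)
    (r : NNReal) (hr : ∀ i, v (algebraMap (MvPowerSeries (Fin n) k) K (MvPowerSeries.X i)) ≤ r) :
    ∀ (d : ℕ) (f : MvPowerSeries (Fin n) k), (∀ α : Fin n →₀ ℕ, (∑ i, α i) < d → coeff α f = 0) →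
      v (algebraMap _ K f) ≤ r ^ d := by
  classical
  intro d
  induction d with
  | zero => intro f _; simpa using hle f
  | succ d ih =>
    intro f hf
    set g : Fin n → MvPowerSeries (Fin n) k :=
      fun i β => if ∀ j, j < i → β j = 0 then coeff (β + Finsupp.single i 1) f else 0 with hgdef
    have hgval : ∀ (i : Fin n) (β : Fin n →₀ ℕ), coeff β (g i) =
        if ∀ j, j < i → β j = 0 then coeff (β + Finsupp.single i 1) f else 0 := fun i β => rfl
    have hfg : f = ∑ i, X i * g i := by
      ext α
      rw [map_sum]
      have hcoeff : ∀ i, coeff α (X i * g i) =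
          if Finsupp.single i 1 ≤ α then coeff (α - Finsupp.single i 1) (g i) else 0 := by
        intro i
        rw [X_def, coeff_monomial_mul]
        simp
      by_cases hα : α = 0
      · subst hα
        rw [hf 0 (by simp)]
        refine (Finset.sum_eq_zero fun i _ => ?_).symm
        rw [hcoeff i, if_neg]
        intro hle1
        have := Finsupp.le_def.mp hle1 i
        simp at this
      · obtain ⟨i₁, hi₁⟩ := Finsupp.ne_iff.mp hα
        simp only [Finsupp.coe_zero, Pi.zero_apply] at hi₁
        have hS : (Finset.univ.filter (fun i => α i ≠ 0)).Nonempty := ⟨i₁, by simp [hi₁]⟩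
        set i₀ := (Finset.univ.filter (fun i => α i ≠ 0)).min' hS with hi₀def
        have hi₀mem : α i₀ ≠ 0 := by have := Finset.min'_mem _ hS; simpa using this
        have hi₀min : ∀ j, j < i₀ → α j = 0 := by
          intro j hj
          by_contra hj0
          exact absurd (Finset.min'_le _ j (by simp [hj0])) (not_le.mpr hj)
        have hsle : Finsupp.single i₀ 1 ≤ α :=
          Finsupp.single_le_iff.mpr (Nat.one_le_iff_ne_zero.mpr hi₀mem)
        rw [Finset.sum_eq_single i₀]
        · rw [hcoeff i₀, if_pos hsle, hgval, if_pos, tsub_add_cancel_of_le hsle]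
          intro j hj
          simp [Finsupp.tsub_apply, Finsupp.single_apply, (fun h : i₀ = j => hj.ne' h), hi₀min j hj]
        · intro i _ hi
          rw [hcoeff i]
          by_cases hle1 : Finsupp.single i 1 ≤ α
          · rw [if_pos hle1, hgval, if_neg]
            intro hall
            have hαi : α i ≠ 0 := by
              have := Finsupp.single_le_iff.mp hle1; omega
            have h1 : i₀ ≤ i := Finset.min'_le _ i (by simp [hαi])
            have h2 : i₀ < i := lt_of_le_of_ne h1 (Ne.symm hi)
            have := hall i₀ h2
            rw [Finsupp.tsub_apply, Finsupp.single_apply,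
              if_neg (fun h : i = i₀ => h2.ne' h), tsub_zero] at this
            exact hi₀mem this
          · rw [if_neg hle1]
        · intro h; exact absurd (Finset.mem_univ i₀) h
    calc v (algebraMap _ K f) = v (∑ i, algebraMap (MvPowerSeries (Fin n) k) K (X i * g i)) := by
          rw [← map_sum, ← hfg]
      _ ≤ r ^ (d + 1) := by
          apply Valuation.map_sum_le
          intro i _
          rw [map_mul, v.map_mul, pow_succ]
          have hgi : v (algebraMap (MvPowerSeries (Fin n) k) K (g i)) ≤ r ^ d := by
            apply ih
            intro β hβ
            rw [hgval]
            split
            · apply hf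
              have : (∑ j : Fin n, ((β + Finsupp.single i 1) : Fin n →₀ ℕ) j) = (∑ j, β j) + 1 := by
                simp only [Finsupp.add_apply, Finset.sum_add_distrib]
                simp [Finsupp.single_apply]
              omega
            · rfl
          calc v (algebraMap (MvPowerSeries (Fin n) k) K (X i)) *
                v (algebraMap (MvPowerSeries (Fin n) k) K (g i)) ≤ r * r ^ d :=
                mul_le_mul' (hr i) hgi
            _ = r ^ d * r := mul_comm _ _

theorem aux_lead {k : Type*} [Field k] {n : ℕ} {K : Type*} [Field K]
    [Algebra (MvPowerSeries (Fin n) k) K] (v : Valuation K NNReal)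
    (w : (Fin n →₀ ℕ) → NNReal) (hw0 : ∀ α, w α ≠ 0)
    (hwmon : ∀ (α : Fin n →₀ ℕ) (a : k), a ≠ 0 →
      v (algebraMap (MvPowerSeries (Fin n) k) K (monomial α a)) = w α)
    (hwinj : ∀ α β : Fin n →₀ ℕ, w α = w β → α = β)
    (r : NNReal) (hr1 : r < 1) (hwr : ∀ α : Fin n →₀ ℕ, w α ≤ r ^ (∑ i, α i))
    (hsmall : ∀ (d : ℕ) (f : MvPowerSeries (Fin n) k),
      (∀ α : Fin n →₀ ℕ, (∑ i, α i) < d → coeff α f = 0) →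
        v (algebraMap _ K f) ≤ r ^ d)
    (f : MvPowerSeries (Fin n) k) (hf : f ≠ 0) :
    ∃ α₀ : Fin n →₀ ℕ, coeff α₀ f ≠ 0 ∧ v (algebraMap _ K f) = w α₀ ∧
      ∀ β : Fin n →₀ ℕ, coeff β f ≠ 0 → w β ≤ w α₀ := by
  classical
  obtain ⟨α₁, hα₁⟩ := (ne_zero_iff_exists_coeff_ne_zero f).mp hf
  set T : ℕ → Finset (Fin n →₀ ℕ) :=
    fun d => (Finset.Iic (Finsupp.equivFunOnFinite.symm (fun _ => d))).filter
      (fun α => coeff α f ≠ 0) with hTdef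
  have hTmem : ∀ (d : ℕ) (α : Fin n →₀ ℕ), α ∈ T d ↔ (∀ i, α i ≤ d) ∧ coeff α f ≠ 0 := by
    intro d α
    simp [hTdef, Finsupp.le_def]
  have hdegmem : ∀ (d : ℕ) (α : Fin n →₀ ℕ), coeff α f ≠ 0 → (∑ i, α i) ≤ d → α ∈ T d := by
    intro d α h1 h2
    refine (hTmem d α).mpr ⟨fun i => le_trans ?_ h2, h1⟩
    exact Finset.single_le_sum (fun _ _ => Nat.zero_le _) (Finset.mem_univ i)
  have hbig : ∀ (d : ℕ) (α : Fin n →₀ ℕ), d ≤ (∑ i, α i) → w α ≤ r ^ d :=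
    fun d α h => le_trans (hwr α) (pow_le_pow_of_le_one (zero_le : (0:NNReal) ≤ r) hr1.le h)
  obtain ⟨d₁, hd₁⟩ := exists_pow_lt_of_lt_one ((pos_iff_ne_zero.mpr (hw0 α₁))) hr1
  have hα₁T : α₁ ∈ T d₁ := by
    apply hdegmem _ _ hα₁
    by_contra hcon
    exact absurd (hbig d₁ α₁ (le_of_not_ge hcon)) (not_le.mpr hd₁)
  obtain ⟨α₀, hα₀T, hmax⟩ := Finset.exists_max_image (T d₁) w ⟨α₁, hα₁T⟩
  have hα₀ : coeff α₀ f ≠ 0 := ((hTmem _ _).mp hα₀T).2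
  have hglob : ∀ β : Fin n →₀ ℕ, coeff β f ≠ 0 → w β ≤ w α₀ := by
    intro β hβ
    by_cases hβd : (∑ i, β i) ≤ d₁
    · exact hmax β (hdegmem _ _ hβ hβd)
    · exact le_trans (le_trans (hbig d₁ β (le_of_not_ge hβd)) hd₁.le) (hmax α₁ hα₁T)
  refine ⟨α₀, hα₀, ?_, hglob⟩
  obtain ⟨d₂, hd₂⟩ := exists_pow_lt_of_lt_one ((pos_iff_ne_zero.mpr (hw0 α₀))) hr1
  set e := max d₂ (∑ i, α₀ i) with hedef
  have hre : r ^ e < w α₀ :=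
    lt_of_le_of_lt (pow_le_pow_of_le_one (zero_le : (0:NNReal) ≤ r) hr1.le (le_max_left _ _)) hd₂
  set P : MvPowerSeries (Fin n) k := ∑ α ∈ T e, monomial α (coeff α f) with hPdef
  have hα₀e : α₀ ∈ T e := hdegmem _ _ hα₀ (le_max_right _ _)
  have hcoeffP : ∀ β : Fin n →₀ ℕ, coeff β P = if β ∈ T e then coeff β f else 0 := by
    intro β
    rw [hPdef, map_sum]
    classical
    rw [Finset.sum_congr rfl (fun α _ => coeff_monomial β α (coeff α f)),
      Finset.sum_ite_eq (T e) β (fun α => coeff α f)]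
  have hrest : v (algebraMap (MvPowerSeries (Fin n) k) K (f - P)) ≤ r ^ e := by
    apply hsmall
    intro β hβ
    rw [map_sub, hcoeffP]
    by_cases h : coeff β f = 0
    · simp [h]
    · rw [if_pos (hdegmem _ _ h hβ.le), sub_self]
  have hvP : v (algebraMap (MvPowerSeries (Fin n) k) K P) = w α₀ := by
    rw [hPdef, map_sum]
    rw [Valuation.map_sum_eq_of_lt v (j := α₀) hα₀e]
    · exact hwmon _ _ hα₀
    · intro β hβ
      simp only [Finset.mem_sdiff, Finset.mem_singleton] at hβ
      have hβ0 : coeff β f ≠ 0 := ((hTmem _ _).mp hβ.1).2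
      rw [hwmon _ _ hβ0, hwmon _ _ hα₀]
      exact lt_of_le_of_ne (hglob β hβ0) (fun h => hβ.2 (hwinj _ _ h))
  have hsplit : f = P + (f - P) := by ring
  rw [hsplit, map_add, Valuation.map_add_eq_of_lt_left, hvP]
  rw [hvP]
  exact lt_of_le_of_lt hrest hre

/-- For the monomial valuation on the fraction field of `k[[x₁,…,xₙ]]` (a valuation `≤ 1`
on power series whose values `0 < cᵢ < 1` on the variables are multiplicatively rationally
independent), the natural map from `k` to the residue field of the valuation ring is
bijective. -/
theorem stmt_8 {k : Type*} [Field k] (n : ℕ) (hn : 1 ≤ n)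
    (v : Valuation (FractionRing (MvPowerSeries (Fin n) k)) NNReal)
    (hle : ∀ f : MvPowerSeries (Fin n) k,
      v (algebraMap (MvPowerSeries (Fin n) k) (FractionRing (MvPowerSeries (Fin n) k)) f) ≤ 1)
    (hpos : ∀ i : Fin n, 0 <
      v (algebraMap (MvPowerSeries (Fin n) k) (FractionRing (MvPowerSeries (Fin n) k))
          (MvPowerSeries.X i)))
    (hlt : ∀ i : Fin n,
      v (algebraMap (MvPowerSeries (Fin n) k) (FractionRing (MvPowerSeries (Fin n) k))
          (MvPowerSeries.X i)) < 1)
    (hind : ∀ m : Fin n → ℤ,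
      (∏ i, v (algebraMap (MvPowerSeries (Fin n) k) (FractionRing (MvPowerSeries (Fin n) k))
          (MvPowerSeries.X i)) ^ m i) = 1 → m = 0) :
    Function.Bijective (fun c : k =>
      IsLocalRing.residue v.valuationSubring
        ⟨algebraMap (MvPowerSeries (Fin n) k) (FractionRing (MvPowerSeries (Fin n) k))
            (MvPowerSeries.C (σ := Fin n) (R := k) c),
          (Valuation.mem_valuationSubring_iff v _).mpr (hle _)⟩) := by
  classical
  set K := FractionRing (MvPowerSeries (Fin n) k) with hKdef
  set φ := algebraMap (MvPowerSeries (Fin n) k) K with hφdef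
  have hvC : ∀ a : k, a ≠ 0 → v (φ (MvPowerSeries.C (σ := Fin n) (R := k) a)) = 1 := by
    intro a ha
    have h1 : v (φ (MvPowerSeries.C (σ := Fin n) (R := k) a)) * v (φ (MvPowerSeries.C (σ := Fin n) (R := k) a⁻¹)) = 1 := by
      rw [← v.map_mul, ← map_mul, ← map_mul, mul_inv_cancel₀ ha, map_one, map_one, v.map_one]
    refine le_antisymm (hle _) ?_
    calc (1:NNReal) = _ := h1.symm
      _ ≤ v (φ (MvPowerSeries.C (σ := Fin n) (R := k) a)) * 1 := mul_le_mul_right (hle _) _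
      _ = _ := mul_one _
  set c : Fin n → NNReal := fun i => v (φ (MvPowerSeries.X i)) with hcdef
  have hc0 : ∀ i, c i ≠ 0 := fun i => (hpos i).ne'
  set w : (Fin n →₀ ℕ) → NNReal := fun α => ∏ i, c i ^ α i with hwdef
  have hw0 : ∀ α, w α ≠ 0 := fun α =>
    Finset.prod_ne_zero_iff.mpr fun i _ => pow_ne_zero _ (hc0 i)
  have hwmon : ∀ (α : Fin n →₀ ℕ) (a : k), a ≠ 0 → v (φ (monomial α a)) = w α := by
    intro α a ha
    have hm : (monomial α a : MvPowerSeries (Fin n) k)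
        = MvPowerSeries.C (σ := Fin n) (R := k) a * ∏ i, MvPowerSeries.X i ^ α i := by
      rw [aux_prod_X_pow, ← monomial_zero_eq_C_apply, monomial_mul_monomial, zero_add, mul_one]
    rw [hm, map_mul, v.map_mul, hvC a ha, one_mul, map_prod, map_prod]
    simp only [map_pow, hwdef, hcdef]
  have hwinj : ∀ α β : Fin n →₀ ℕ, w α = w β → α = β := by
    intro α β h
    have h2 : (fun i => (α i : ℤ) - (β i : ℤ)) = 0 := by
      apply hind
      have hz : ∀ i ∈ Finset.univ, c i ^ ((α i : ℤ) - (β i : ℤ))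
          = c i ^ (α i : ℤ) / c i ^ (β i : ℤ) := fun i _ => zpow_sub₀ (hc0 i) _ _
      rw [Finset.prod_congr rfl hz, Finset.prod_div_distrib]
      simp only [zpow_natCast]
      simp only [hwdef] at h
      rw [h]
      exact div_self (by simpa [hwdef] using hw0 β)
    ext i
    have := congrFun h2 i
    simp only [Pi.zero_apply] at this
    omega
  set r : NNReal := Finset.univ.sup c with hrdef
  have hcr : ∀ i, c i ≤ r := fun i => Finset.le_sup (Finset.mem_univ i)
  have hr1 : r < 1 := by
    rw [hrdef]
    exact (Finset.sup_lt_iff (by norm_num : (⊥ : NNReal) < 1)).mpr fun i _ => hlt i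
  have hwr : ∀ α : Fin n →₀ ℕ, w α ≤ r ^ (∑ i, α i) := by
    intro α
    calc w α ≤ ∏ i, r ^ α i :=
          Finset.prod_le_prod' (fun i _ => pow_le_pow_left₀ (by positivity) (hcr i) _)
      _ = r ^ (∑ i, α i) := by rw [Finset.prod_pow_eq_pow_sum]
  have hsmall := aux_small v hle r hcr
  have hlead := fun f hf => aux_lead v w hw0 hwmon hwinj r hr1 hwr hsmall f hf
  have hmaxmem : ∀ x : v.valuationSubring,
      x ∈ IsLocalRing.maximalIdeal v.valuationSubring ↔ v (x : K) < 1 := by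
    intro x
    rw [ValuationSubring.valuation_lt_one_iff]
    exact ((Valuation.isEquiv_valuation_valuationSubring v).lt_one_iff_lt_one).symm
  have hres : ∀ x y : v.valuationSubring, v ((x : K) - (y : K)) < 1 →
      IsLocalRing.residue v.valuationSubring x = IsLocalRing.residue v.valuationSubring y := by
    intro x y h
    have hmem : x - y ∈ IsLocalRing.maximalIdeal v.valuationSubring := (hmaxmem _).mpr h
    have h0 : IsLocalRing.residue v.valuationSubring (x - y) = 0 :=
      Ideal.Quotient.eq_zero_iff_mem.mpr hmem
    exact sub_eq_zero.mp (by rw [← map_sub]; exact h0)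
  have hres2 : ∀ x y : v.valuationSubring,
      IsLocalRing.residue v.valuationSubring x = IsLocalRing.residue v.valuationSubring y →
      v ((x : K) - (y : K)) < 1 := by
    intro x y h
    have h0 : IsLocalRing.residue v.valuationSubring (x - y) = 0 := by
      rw [map_sub, h, sub_self]
    exact (hmaxmem _).mp (Ideal.Quotient.eq_zero_iff_mem.mp h0)
  constructor
  · intro a b hab
    by_contra hne
    have h1 : v (φ (MvPowerSeries.C (σ := Fin n) (R := k) (a - b))) = 1 := hvC _ (sub_ne_zero.mpr hne)
    have h2 := hres2 _ _ hab
    rw [show ((⟨φ (MvPowerSeries.C (σ := Fin n) (R := k) a), _⟩ : v.valuationSubring) : K)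
        - ((⟨φ (MvPowerSeries.C (σ := Fin n) (R := k) b), _⟩ : v.valuationSubring) : K)
        = φ (MvPowerSeries.C (σ := Fin n) (R := k) (a - b)) by rw [← map_sub, ← map_sub], h1] at h2
    exact lt_irrefl _ h2
  · intro y
    obtain ⟨x, rfl⟩ := IsLocalRing.residue_surjective (R := v.valuationSubring) y
    obtain ⟨f, g, hgmem, hx⟩ := IsFractionRing.div_surjective (A := MvPowerSeries (Fin n) k) (x : K)
    have hg0 : g ≠ 0 := nonZeroDivisors.ne_zero hgmem
    have hφg : φ g ≠ 0 := fun hz =>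
      hg0 ((map_eq_zero_iff φ (IsFractionRing.injective (MvPowerSeries (Fin n) k) K)).mp hz)
    by_cases hf0 : f = 0
    · refine ⟨0, hres _ _ ?_⟩
      have hx0 : (x : K) = 0 := by rw [← hx, hf0, map_zero, zero_div]
      show v (φ (MvPowerSeries.C (σ := Fin n) (R := k) 0) - (x : K)) < 1
      rw [hx0, map_zero, map_zero, sub_zero, v.map_zero]
      exact zero_lt_one
    · obtain ⟨αf, hcf, hvf, hmaxf⟩ := hlead f hf0
      obtain ⟨αg, hcg, hvg, hmaxg⟩ := hlead g hg0
      have hxv : v (x : K) ≤ 1 := (Valuation.mem_valuationSubring_iff v _).mp x.2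
      have hxval : v (x : K) = w αf / w αg := by rw [← hx, map_div₀, hvf, hvg]
      have hle2 : w αf ≤ w αg := by
        rw [hxval, div_le_one₀ (pos_iff_ne_zero.mpr (hw0 αg))] at hxv
        exact hxv
      rcases eq_or_lt_of_le hle2 with heq | hlt2
      · have hαeq : αf = αg := hwinj _ _ heq
        set a := coeff αf f with hadef
        set b := coeff αf g with hbdef
        have hb0 : b ≠ 0 := by rw [hbdef, hαeq]; exact hcg
        refine ⟨a * b⁻¹, hres _ _ ?_⟩
        show v (φ (MvPowerSeries.C (σ := Fin n) (R := k) (a * b⁻¹)) - (x : K)) < 1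
        have hdiff : φ (MvPowerSeries.C (σ := Fin n) (R := k) (a * b⁻¹)) - (x : K)
            = φ (MvPowerSeries.C (σ := Fin n) (R := k) (a * b⁻¹) * g - f) / φ g := by
          rw [← hx]
          rw [map_sub φ, map_mul φ, sub_div, mul_div_cancel_right₀ _ hφg]
        set h := MvPowerSeries.C (σ := Fin n) (R := k) (a * b⁻¹) * g - f with hhdef
        by_cases hh0 : h = 0
        · rw [hdiff, hh0, map_zero, zero_div, v.map_zero]
          exact zero_lt_one
        · obtain ⟨β₀, hcβ, hvh, _⟩ := hlead h hh0
          have hβne : β₀ ≠ αf := by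
            intro hEq
            apply hcβ
            rw [hEq, hhdef, map_sub, coeff_C_mul, ← hbdef, ← hadef,
              mul_assoc, inv_mul_cancel₀ hb0, mul_one, sub_self]
          have hwβ : w β₀ < w αf := by
            have hle3 : w β₀ ≤ w αf := by
              by_cases hcf2 : coeff β₀ f = 0
              · have hcg2 : coeff β₀ g ≠ 0 := by
                  intro hz
                  apply hcβ
                  rw [hhdef, map_sub, coeff_C_mul, hz, hcf2, mul_zero, sub_zero]
                rw [hαeq]
                exact hmaxg _ hcg2
              · exact hmaxf _ hcf2
            exact lt_of_le_of_ne hle3 (fun e => hβne (hwinj _ _ e))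
          rw [hdiff, map_div₀, hvh, hvg, ← hαeq]
          exact (div_lt_one (pos_iff_ne_zero.mpr (hw0 αf))).mpr hwβ
      · refine ⟨0, hres _ _ ?_⟩
        show v (φ (MvPowerSeries.C (σ := Fin n) (R := k) 0) - (x : K)) < 1
        rw [map_zero, map_zero, zero_sub, Valuation.map_neg, hxval]
        exact (div_lt_one (pos_iff_ne_zero.mpr (hw0 αg))).mpr hlt2
end

section
/- Let k be a field, n ≥ 1, and let v be a valuation on the formal power series ring k[[x_1, …, x_n]] with values in ℝ≥0 such that v(f) ≤ 1 for every f, and such that the values c_i = v(x_i) satisfy 0 < c_i < 1 and are multiplicatively rationally independent. Then the set of values {v(f) : f ∈ k[[x_1, …, x_n]], f ≠ 0} is exactly the multiplicative submonoid of ℝ≥0 generated by c_1, …, c_n. -/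
open MvPowerSeries Finsupp

private lemma stmt9_prod_monomial {σ k : Type*} [CommRing k] [DecidableEq σ]
    (s : Finset σ) (g : σ → (σ →₀ ℕ)) :
    ∏ i ∈ s, (MvPowerSeries.monomial (R := k) (g i) (1 : k)) =
      MvPowerSeries.monomial (R := k) (∑ i ∈ s, g i) 1 := by
  classical
  induction s using Finset.induction with
  | empty => simp [MvPowerSeries.monomial_zero_one]
  | @insert _ _ h ih =>
      rw [Finset.prod_insert h, Finset.sum_insert h, ih,
        MvPowerSeries.monomial_mul_monomial, one_mul]

private lemma stmt9_monomial_one_eq {n : ℕ} {k : Type*} [CommRing k] (d : Fin n →₀ ℕ) :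
    (MvPowerSeries.monomial (R := k) d (1 : k)) = ∏ i, MvPowerSeries.X i ^ d i := by
  classical
  simp_rw [MvPowerSeries.X_pow_eq]
  rw [stmt9_prod_monomial, Finsupp.univ_sum_single]

/-- For a valuation `v ≤ 1` on `k[[x₁,…,xₙ]]` with `0 < v(xᵢ) < 1` multiplicatively
rationally independent, the set of values of nonzero power series is exactly the
multiplicative submonoid of `ℝ≥0` generated by the `v(xᵢ)`. -/
theorem stmt_9 {k : Type*} [Field k] (n : ℕ) (hn : 1 ≤ n)
    (v : Valuation (MvPowerSeries (Fin n) k) NNReal)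
    (hle : ∀ f : MvPowerSeries (Fin n) k, v f ≤ 1)
    (hpos : ∀ i : Fin n, 0 < v (MvPowerSeries.X i))
    (hlt : ∀ i : Fin n, v (MvPowerSeries.X i) < 1)
    (hind : ∀ m : Fin n → ℤ, ∏ i, v (MvPowerSeries.X i) ^ m i = 1 → m = 0) :
    {x : NNReal | ∃ f : MvPowerSeries (Fin n) k, f ≠ 0 ∧ v f = x} =
      (Submonoid.closure (Set.range fun i : Fin n => v (MvPowerSeries.X i)) :
        Submonoid NNReal) := by
  classical
  have hne : Nonempty (Fin n) := ⟨⟨0, hn⟩⟩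
  set c : Fin n → NNReal := fun i => v (MvPowerSeries.X i) with hc
  have hc0 : ∀ i, c i ≠ 0 := fun i => (hpos i).ne'
  -- value of monomials
  have hvC : ∀ a : k, a ≠ 0 → v ((MvPowerSeries.C (σ := Fin n) (R := k)) a) = 1 := by
    intro a ha
    obtain ⟨u, hu⟩ := (Ne.isUnit ha).map (MvPowerSeries.C (σ := Fin n) (R := k))
    have h1 : v (u : MvPowerSeries (Fin n) k) * v ((u⁻¹ : (MvPowerSeries (Fin n) k)ˣ) :
        MvPowerSeries (Fin n) k) = 1 := by
      rw [← map_mul]; simp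
    have h2 : (1 : NNReal) ≤ v (u : MvPowerSeries (Fin n) k) := by
      calc (1 : NNReal) = _ := h1.symm
        _ ≤ v (u : MvPowerSeries (Fin n) k) * 1 := by
            exact mul_le_mul_right (hle _) _
        _ = v (u : MvPowerSeries (Fin n) k) := mul_one _
    rw [← hu]
    exact le_antisymm (hle _) h2
  have hvmon : ∀ (d : Fin n →₀ ℕ) (a : k), a ≠ 0 →
      v (MvPowerSeries.monomial (R := k) d a) = ∏ i, c i ^ d i := by
    intro d a ha
    have : (MvPowerSeries.monomial (R := k) d a) =
        (MvPowerSeries.C (σ := Fin n) (R := k)) a * MvPowerSeries.monomial (R := k) d 1 := by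
      rw [← MvPowerSeries.monomial_zero_eq_C_apply, MvPowerSeries.monomial_mul_monomial,
        zero_add, mul_one]
    rw [this, map_mul, hvC a ha, one_mul, stmt9_monomial_one_eq, map_prod]
    simp [hc]
  -- injectivity of d ↦ ∏ c i ^ d i
  have hprodne : ∀ d : Fin n →₀ ℕ, (∏ i, c i ^ d i) ≠ 0 := by
    intro d
    rw [Finset.prod_ne_zero_iff]
    exact fun i _ => pow_ne_zero _ (hc0 i)
  have hinj : ∀ d e : Fin n →₀ ℕ, (∏ i, c i ^ d i) = (∏ i, c i ^ e i) → d = e := by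
    intro d e h
    have key : ∏ i, c i ^ ((d i : ℤ) - (e i : ℤ)) = 1 := by
      have : ∀ i : Fin n, c i ^ ((d i : ℤ) - (e i : ℤ)) = c i ^ (d i) / c i ^ (e i) := by
        intro i
        rw [zpow_sub₀ (hc0 i), zpow_natCast, zpow_natCast]
      simp_rw [this]
      rw [Finset.prod_div_distrib, h, div_self (hprodne e)]
    have := hind _ key
    ext i
    have hi := congrFun this i
    simpa [sub_eq_zero] using hi
  -- the max of the c i
  set cm : NNReal := Finset.univ.sup' (Finset.univ_nonempty) c with hcm
  have hcm1 : cm < 1 := by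
    rw [hcm, Finset.sup'_lt_iff]
    exact fun i _ => hlt i
  have hcmle : ∀ i, c i ≤ cm := fun i => Finset.le_sup' c (Finset.mem_univ i)
  have hmon_le : ∀ d : Fin n →₀ ℕ, (∏ i, c i ^ d i) ≤ cm ^ (∑ i, d i) := by
    intro d
    rw [← Finset.prod_pow_eq_pow_sum]
    exact Finset.prod_le_prod' fun i _ => pow_le_pow_left' (hcmle i) _
  -- tail bound
  have exE : ∀ (N : ℕ) (d : Fin n →₀ ℕ), N ≤ ∑ i, d i →
      ∃ e : Fin n →₀ ℕ, e ≤ d ∧ ∑ i, e i = N := by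
    intro N
    induction N with
    | zero => exact fun d _ => ⟨0, zero_le, by simp⟩
    | succ N ih =>
      intro d hd
      obtain ⟨e, he, hesum⟩ := ih d (Nat.le_of_succ_le hd)
      have hex : ∃ i, e i < d i := by
        by_contra hcon
        push_neg at hcon
        have : ∑ i, d i ≤ ∑ i, e i := Finset.sum_le_sum fun i _ => hcon i
        omega
      obtain ⟨i, hi⟩ := hex
      refine ⟨e + Finsupp.single i 1, ?_, ?_⟩
      · rw [Finsupp.le_def]
        intro j
        rcases eq_or_ne j i with rfl | hj
        · simpa using hi
        · have := he j
          simp [Finsupp.single_apply, Ne.symm hj]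
          exact this
      · have hs : ∑ j, (Finsupp.single i 1 : Fin n →₀ ℕ) j = 1 := by
          simp [Finsupp.single_apply]
        simp only [Finsupp.add_apply, Finset.sum_add_distrib, hesum, hs]
  have tail : ∀ (N : ℕ) (g : MvPowerSeries (Fin n) k),
      (∀ d : Fin n →₀ ℕ, (∑ i, d i) < N → MvPowerSeries.coeff (R := k) d g = 0) →
      v g ≤ cm ^ N := by
    intro N g hg
    -- the set of exponents with total degree N
    have hSfin : {e : Fin n →₀ ℕ | ∑ i, e i = N}.Finite := by
      apply (Set.finite_Iic (Finsupp.equivFunOnFinite.symm fun _ : Fin n => N)).subset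
      intro e he
      rw [Set.mem_Iic, Finsupp.le_def]
      intro j
      have : e j ≤ ∑ i, e i := Finset.single_le_sum (fun i _ => Nat.zero_le _) (Finset.mem_univ j)
      simpa [he.le] using this.trans_eq he
    set Sfin : Finset (Fin n →₀ ℕ) := hSfin.toFinset with hSfin'
    -- choose a decomposition function
    choose E hEle hEsum using exE N
    set E' : (Fin n →₀ ℕ) → (Fin n →₀ ℕ) := fun d =>
      if h : N ≤ ∑ i, d i then E d h else 0 with hE'
    set H : (Fin n →₀ ℕ) → MvPowerSeries (Fin n) k := fun e d' =>
      if E' (e + d') = e then MvPowerSeries.coeff (R := k) (e + d') g else 0 with hH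
    have hHcoeff : ∀ e d', MvPowerSeries.coeff (R := k) d' (H e) =
        if E' (e + d') = e then MvPowerSeries.coeff (R := k) (e + d') g else 0 := fun e d' => rfl
    have hdecomp : g = ∑ e ∈ Sfin, MvPowerSeries.monomial (R := k) e 1 * H e := by
      ext d
      rw [map_sum]
      have hterm : ∀ e ∈ Sfin, MvPowerSeries.coeff (R := k) d (MvPowerSeries.monomial (R := k) e 1 * H e) =
          if e ≤ d ∧ E' d = e then MvPowerSeries.coeff (R := k) d g else 0 := by
        intro e _
        rw [MvPowerSeries.coeff_monomial_mul]
        by_cases hed : e ≤ d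
        · rw [if_pos hed, hHcoeff, add_tsub_cancel_of_le hed, one_mul]
          by_cases hEd : E' d = e
          · rw [if_pos hEd, if_pos ⟨hed, hEd⟩]
          · rw [if_neg hEd, if_neg (by tauto)]
        · rw [if_neg hed, if_neg (by tauto)]
      rw [Finset.sum_congr rfl hterm]
      by_cases hd : N ≤ ∑ i, d i
      · have hEd : E' d = E d hd := by rw [hE']; simp [hd]
        have hmem : E' d ∈ Sfin := by
          rw [hSfin', Set.Finite.mem_toFinset]
          rw [hEd]; exact hEsum d hd
        have hEdle : E' d ≤ d := by rw [hEd]; exact hEle d hd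
        rw [Finset.sum_eq_single (E' d)]
        · rw [if_pos ⟨hEdle, rfl⟩]
        · intro b _ hb
          rw [if_neg (fun hcon => hb hcon.2.symm)]
        · intro hcon; exact absurd hmem hcon
      · push_neg at hd
        rw [hg d hd, Finset.sum_eq_zero]
        intro e he
        rw [hSfin', Set.Finite.mem_toFinset] at he
        have he' : ∑ i, e i = N := he
        have : ¬ e ≤ d := by
          intro hcon
          have : ∑ i, e i ≤ ∑ i, d i := Finset.sum_le_sum fun i _ => hcon i
          omega
        rw [if_neg (by tauto)]
    rw [hdecomp]
    apply Valuation.map_sum_le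
    intro e he
    rw [hSfin', Set.Finite.mem_toFinset] at he
    rw [map_mul, hvmon e 1 one_ne_zero]
    calc (∏ i, c i ^ e i) * v (H e) ≤ (∏ i, c i ^ e i) * 1 := mul_le_mul_right (hle _) _
      _ = ∏ i, c i ^ e i := mul_one _
      _ ≤ cm ^ (∑ i, e i) := hmon_le e
      _ = cm ^ N := by rw [he]
  -- main proof
  ext x
  simp only [Set.mem_setOf_eq, SetLike.mem_coe]
  constructor
  · rintro ⟨f, hf, rfl⟩
    -- pick some nonzero coefficient
    have : ∃ d₁ : Fin n →₀ ℕ, MvPowerSeries.coeff (R := k) d₁ f ≠ 0 := by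
      by_contra hcon
      push_neg at hcon
      exact hf (MvPowerSeries.ext fun d => by rw [hcon d, map_zero])
    obtain ⟨d₁, hd₁⟩ := this
    set ε : NNReal := ∏ i, c i ^ d₁ i with hε
    have hεpos : 0 < ε := pos_iff_ne_zero.mpr (hprodne d₁)
    obtain ⟨N₀, hN₀⟩ := exists_pow_lt_of_lt_one hεpos hcm1
    set N : ℕ := max N₀ (∑ i, d₁ i + 1) with hN
    have hNε : cm ^ N < ε :=
      lt_of_le_of_lt (pow_le_pow_of_le_one zero_le hcm1.le (le_max_left _ _)) hN₀
    have hTfin : {d : Fin n →₀ ℕ | (∑ i, d i) < N ∧ MvPowerSeries.coeff (R := k) d f ≠ 0}.Finite := by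
      apply (Set.finite_Iic (Finsupp.equivFunOnFinite.symm fun _ : Fin n => N)).subset
      intro d hd
      simp only [Set.mem_setOf_eq] at hd
      rw [Set.mem_Iic, Finsupp.le_def]
      intro j
      have : d j ≤ ∑ i, d i := Finset.single_le_sum (fun i _ => Nat.zero_le _) (Finset.mem_univ j)
      simp only [Finsupp.coe_equivFunOnFinite_symm]
      omega
    set T : Finset (Fin n →₀ ℕ) := hTfin.toFinset with hT
    have hd₁T : d₁ ∈ T := by
      rw [hT, Set.Finite.mem_toFinset]
      exact ⟨lt_of_lt_of_le (Nat.lt_succ_self _) (le_max_right _ _), hd₁⟩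
    obtain ⟨d₀, hd₀T, hd₀max⟩ := Finset.exists_max_image T (fun d => ∏ i, c i ^ d i) ⟨d₁, hd₁T⟩
    have hd₀mem := (Set.Finite.mem_toFinset hTfin).mp hd₀T
    have hεle : ε ≤ ∏ i, c i ^ d₀ i := hd₀max d₁ hd₁T
    set P : MvPowerSeries (Fin n) k :=
      ∑ d ∈ T, MvPowerSeries.monomial (R := k) d (MvPowerSeries.coeff (R := k) d f) with hP
    have hcoeffP : ∀ d, MvPowerSeries.coeff (R := k) d P =
        if d ∈ T then MvPowerSeries.coeff (R := k) d f else 0 := by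
      intro d
      rw [hP, map_sum]
      rw [Finset.sum_congr rfl (fun e _ => MvPowerSeries.coeff_monomial d e _)]
      exact Finset.sum_ite_eq T d _
    have hvP : v P = ∏ i, c i ^ d₀ i := by
      rw [hP, ← Finset.add_sum_erase _ _ hd₀T]
      rw [Valuation.map_add_eq_of_lt_left]
      · exact hvmon d₀ _ hd₀mem.2
      · apply lt_of_lt_of_le (b := ∏ i, c i ^ d₀ i)
        · apply Valuation.map_sum_lt _ (hprodne d₀)
          intro e he
          have heT := Finset.mem_of_mem_erase he
          have hene : e ≠ d₀ := Finset.ne_of_mem_erase he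
          have hemem := (Set.Finite.mem_toFinset hTfin).mp heT
          rw [hvmon e _ hemem.2]
          exact lt_of_le_of_ne (hd₀max e heT) (fun hcon => hene (hinj _ _ hcon))
        · rw [hvmon d₀ _ hd₀mem.2]
    have hvg : v (f - P) < ∏ i, c i ^ d₀ i := by
      apply lt_of_le_of_lt (tail N (f - P) ?_)
      · exact lt_of_lt_of_le hNε hεle
      · intro d hd
        rw [map_sub, hcoeffP]
        by_cases hdf : MvPowerSeries.coeff (R := k) d f = 0
        · rw [hdf, if_neg, sub_zero]
          rw [hT, Set.Finite.mem_toFinset]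
          exact fun hcon => hcon.2 hdf
        · rw [if_pos, sub_self]
          rw [hT, Set.Finite.mem_toFinset]
          exact ⟨hd, hdf⟩
    have hvf : v f = ∏ i, c i ^ d₀ i := by
      have : f = P + (f - P) := by ring
      rw [this, Valuation.map_add_eq_of_lt_left, hvP]
      rw [hvP]; exact hvg
    rw [hvf]
    exact Submonoid.prod_mem _ fun i _ =>
      pow_mem (Submonoid.subset_closure (Set.mem_range_self i)) _
  · intro hx
    induction hx using Submonoid.closure_induction with
    | mem y hy =>
        obtain ⟨i, rfl⟩ := hy
        refine ⟨MvPowerSeries.X i, ?_, rfl⟩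
        intro hcon
        have := hpos i
        rw [hcon, map_zero] at this
        exact lt_irrefl _ this
    | one => exact ⟨1, one_ne_zero, map_one v⟩
    | mul y z _ _ hy hz =>
        obtain ⟨f, hf, rfl⟩ := hy
        obtain ⟨g, hg, rfl⟩ := hz
        exact ⟨f * g, mul_ne_zero hf hg, map_mul v f g⟩
end

section
/- Let k be a field, n ≥ 1, and let v be a valuation on the formal power series ring k[[x_1, …, x_n]] with values in ℝ≥0 such that v(f) ≤ 1 for every f, and such that the values c_i = v(x_i) satisfy 0 < c_i < 1 and are multiplicatively rationally independent. Then for any nonzero f, g ∈ k[[x_1, …, x_n]] with v(f) = v(g), there exists a nonzero scalar c ∈ k such that either f = c·g or v(f − c·g) < v(f). -/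
open MvPowerSeries Finsupp in
/-- For a valuation `v ≤ 1` on `k[[x₁,…,xₙ]]` with `0 < v(xᵢ) < 1` multiplicatively
rationally independent: any two nonzero power series with the same value agree up to a
nonzero scalar modulo higher value terms (each graded piece of `gr_ν` is one-dimensional). -/
theorem stmt_10 {k : Type*} [Field k] (n : ℕ) (hn : 1 ≤ n)
    (v : Valuation (MvPowerSeries (Fin n) k) NNReal)
    (hle : ∀ f : MvPowerSeries (Fin n) k, v f ≤ 1)
    (hpos : ∀ i : Fin n, 0 < v (MvPowerSeries.X i))
    (hlt : ∀ i : Fin n, v (MvPowerSeries.X i) < 1)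
    (hind : ∀ m : Fin n → ℤ, ∏ i, v (MvPowerSeries.X i) ^ m i = 1 → m = 0)
    (f g : MvPowerSeries (Fin n) k) (hf : f ≠ 0) (hg : g ≠ 0) (hfg : v f = v g) :
    ∃ c : k, c ≠ 0 ∧
      (f = MvPowerSeries.C (σ := Fin n) (R := k) c * g ∨
        v (f - MvPowerSeries.C (σ := Fin n) (R := k) c * g) < v f) := by
  classical
  haveI : Nonempty (Fin n) := ⟨⟨0, hn⟩⟩
  set c : Fin n → NNReal := fun i => v (MvPowerSeries.X i) with hc
  set γ : (Fin n →₀ ℕ) → NNReal := fun e => ∏ i, c i ^ e i with hγ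
  have hγpos : ∀ e, 0 < γ e := fun e => Finset.prod_pos fun i _ => pow_pos (hpos i) _
  set cmax : NNReal := Finset.univ.sup' Finset.univ_nonempty c with hcmax
  have hcle : ∀ i, c i ≤ cmax := fun i => Finset.le_sup' c (Finset.mem_univ i)
  have hcmax1 : cmax < 1 := (Finset.sup'_lt_iff _).mpr fun i _ => hlt i
  -- degree bound on γ
  have hγdeg : ∀ e : Fin n →₀ ℕ, γ e ≤ cmax ^ (∑ i, e i) := by
    intro e
    calc γ e ≤ ∏ i, cmax ^ e i :=
          Finset.prod_le_prod' fun i _ => pow_le_pow_left₀ (by positivity) (hcle i) _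
      _ = cmax ^ (∑ i, e i) := Finset.prod_pow_eq_pow_sum _ _ _
  -- value of a constant
  have hC : ∀ a : k, a ≠ 0 → v (MvPowerSeries.C (σ := Fin n) (R := k) a) = 1 := by
    intro a ha
    have h1 : v (MvPowerSeries.C (σ := Fin n) (R := k) a) * v (MvPowerSeries.C (σ := Fin n) (R := k) a⁻¹) = 1 := by
      rw [← map_mul, ← map_mul, mul_inv_cancel₀ ha, map_one, map_one]
    refine le_antisymm (hle _) ?_
    calc (1 : NNReal) = v (MvPowerSeries.C (σ := Fin n) (R := k) a) * v (MvPowerSeries.C (σ := Fin n) (R := k) a⁻¹) :=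
          h1.symm
      _ ≤ v (MvPowerSeries.C (σ := Fin n) (R := k) a) * 1 := mul_le_mul_right (hle _) _
      _ = v (MvPowerSeries.C (σ := Fin n) (R := k) a) := mul_one _
  -- value of a monomial
  have hmono1 : ∀ e : Fin n →₀ ℕ,
      (MvPowerSeries.monomial e (1 : k)) = ∏ i, MvPowerSeries.X i ^ e i := by
    intro e
    have key : ∀ s : Finset (Fin n),
        (∏ i ∈ s, (MvPowerSeries.X i : MvPowerSeries (Fin n) k) ^ e i)
          = MvPowerSeries.monomial (∑ i ∈ s, Finsupp.single i (e i)) 1 := by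
      intro s
      induction s using Finset.induction with
      | empty => simp [MvPowerSeries.monomial_zero_one]
      | insert j s h ih =>
          rw [Finset.prod_insert h, Finset.sum_insert h, ih, MvPowerSeries.X_pow_eq,
            MvPowerSeries.monomial_mul_monomial, one_mul]
    rw [key Finset.univ, ← Finsupp.sum_fintype e Finsupp.single (fun i => Finsupp.single_zero i),
      Finsupp.sum_single]
  have hvmono : ∀ (e : Fin n →₀ ℕ) (a : k), a ≠ 0 →
      v (MvPowerSeries.monomial e a) = γ e := by
    intro e a ha
    have : MvPowerSeries.monomial e a
        = MvPowerSeries.C (σ := Fin n) (R := k) a * MvPowerSeries.monomial e 1 := by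
      rw [show (MvPowerSeries.C (σ := Fin n) (R := k) a : MvPowerSeries (Fin n) k)
          = MvPowerSeries.monomial 0 a from rfl, MvPowerSeries.monomial_mul_monomial,
        zero_add, mul_one]
    rw [this, map_mul, hC a ha, one_mul, hmono1, map_prod]
    simp only [map_pow]
    rfl
  -- injectivity of γ
  have hinj : ∀ e e' : Fin n →₀ ℕ, γ e = γ e' → e = e' := by
    intro e e' h
    have hz : ∀ i, c i ≠ 0 := fun i => (hpos i).ne'
    have h2 : ∏ i, c i ^ ((e i : ℤ) - (e' i : ℤ)) = 1 := by
      have hstep : ∀ i ∈ Finset.univ, c i ^ ((e i : ℤ) - (e' i : ℤ))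
          = c i ^ (e i : ℕ) / (c i ^ (e' i : ℕ)) := by
        intro i _
        rw [zpow_sub₀ (hz i), zpow_natCast, zpow_natCast]
      rw [Finset.prod_congr rfl hstep, Finset.prod_div_distrib]
      show γ e / γ e' = 1
      rw [h, div_self (hγpos e').ne']
    have := hind (fun i => (e i : ℤ) - (e' i : ℤ)) h2
    ext i
    have hi := congrFun this i
    simpa [sub_eq_zero] using hi
  -- tail bound
  have tail_bound : ∀ (N : ℕ) (g' : MvPowerSeries (Fin n) k),
      (∀ m : Fin n →₀ ℕ, (∑ i, m i) < N → MvPowerSeries.coeff m g' = 0) →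
      v g' ≤ cmax ^ N := by
    intro N
    induction N with
    | zero => intro g' _; simpa using hle g'
    | succ N ih =>
      intro g' hg'
      set h : Fin n → MvPowerSeries (Fin n) k := fun i =>
        (fun m => if ∀ j, j < i → m j = 0 then
          MvPowerSeries.coeff (m + Finsupp.single i 1) g' else 0 :
          (Fin n →₀ ℕ) → k) with hh
      have hco : ∀ (i : Fin n) (m : Fin n →₀ ℕ), MvPowerSeries.coeff m (h i)
          = if ∀ j, j < i → m j = 0 then
              MvPowerSeries.coeff (m + Finsupp.single i 1) g' else 0 := fun i m => rfl
      have hdecomp : g' = ∑ i, MvPowerSeries.X i * h i := by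
        ext m
        rw [map_sum]
        have hterm : ∀ i, MvPowerSeries.coeff m (MvPowerSeries.X i * h i)
            = if Finsupp.single i 1 ≤ m then
                MvPowerSeries.coeff (m - Finsupp.single i 1) (h i) else 0 := by
          intro i
          rw [MvPowerSeries.X_def, MvPowerSeries.coeff_monomial_mul]
          simp
        by_cases hm : m = 0
        · subst hm
          have h0 : MvPowerSeries.coeff 0 g' = 0 := hg' 0 (by simp)
          rw [h0]
          apply (Finset.sum_eq_zero ?_).symm
          intro i _
          rw [hterm i, if_neg]
          intro hle1
          have := Finsupp.single_le_iff.mp hle1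
          simp at this
        · have hsupp : m.support.Nonempty := by
            rw [Finsupp.support_nonempty_iff]; exact hm
          set i0 := m.support.min' hsupp with hi0
          have hi0mem : i0 ∈ m.support := m.support.min'_mem hsupp
          have hi0ne : m i0 ≠ 0 := Finsupp.mem_support_iff.mp hi0mem
          have hi0min : ∀ j, j < i0 → m j = 0 := by
            intro j hj
            by_contra hjne
            exact absurd (m.support.min'_le j (Finsupp.mem_support_iff.mpr hjne))
              (not_le.mpr hj)
          rw [Finset.sum_eq_single i0]
          · rw [hterm i0, if_pos (Finsupp.single_le_iff.mpr (Nat.one_le_iff_ne_zero.mpr hi0ne)),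
              hco, if_pos, tsub_add_cancel_of_le
                (Finsupp.single_le_iff.mpr (Nat.one_le_iff_ne_zero.mpr hi0ne))]
            intro j hj
            rw [Finsupp.tsub_apply, hi0min j hj]
            simp
          · intro i _ hi
            rw [hterm i]
            by_cases hle1 : Finsupp.single i 1 ≤ m
            · rw [if_pos hle1, hco, if_neg]
              intro hzero
              rcases lt_or_gt_of_ne hi with hlt' | hgt'
              · -- i < i0 : then m i = 0 but single i 1 ≤ m gives m i ≥ 1
                have := Finsupp.single_le_iff.mp hle1
                rw [hi0min i hlt'] at this
                simp at this
              · -- i0 < i : (m - single i 1) i0 = m i0 ≠ 0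
                have h5 := hzero i0 hgt'
                rw [Finsupp.tsub_apply] at h5
                simp [Finsupp.single_apply, (ne_of_gt hgt' : i ≠ i0)] at h5
                exact hi0ne h5
            · rw [if_neg hle1]
          · intro hnot; exact absurd (Finset.mem_univ i0) hnot
      have hdeg : ∀ i, v (h i) ≤ cmax ^ N := by
        intro i
        apply ih
        intro m hm
        rw [hco]
        split
        · apply hg'
          have : (∑ j, (m + Finsupp.single i 1 : Fin n →₀ ℕ) j) = (∑ j, m j) + 1 := by
            simp only [Finsupp.add_apply]
            rw [Finset.sum_add_distrib]
            congr 1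
            simp [Finsupp.single_apply]
          omega
        · rfl
      rw [hdecomp]
      apply v.map_sum_le
      intro i _
      rw [map_mul]
      calc v (MvPowerSeries.X i) * v (h i) ≤ cmax * cmax ^ N :=
            mul_le_mul' (hcle i) (hdeg i)
        _ = cmax ^ (N + 1) := (pow_succ' cmax N).symm
  -- leading term
  have lead : ∀ f' : MvPowerSeries (Fin n) k, f' ≠ 0 →
      ∃ e : Fin n →₀ ℕ, MvPowerSeries.coeff e f' ≠ 0 ∧ v f' = γ e ∧
        v (f' - MvPowerSeries.monomial e (MvPowerSeries.coeff e f')) < γ e := by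
    intro f' hf'
    obtain ⟨e0, he0⟩ : ∃ e0, MvPowerSeries.coeff e0 f' ≠ 0 := by
      by_contra hcon
      push_neg at hcon
      exact hf' (MvPowerSeries.ext fun m => by rw [hcon m, map_zero])
    obtain ⟨N, hN⟩ : ∃ N : ℕ, cmax ^ N < γ e0 := exists_pow_lt_of_lt_one (hγpos e0) hcmax1
    have hdegbd : ∀ e : Fin n →₀ ℕ, γ e0 ≤ γ e → ∀ i, e i ≤ N := by
      intro e he i
      by_contra hi
      push_neg at hi
      have h1 : N ≤ ∑ j, e j :=
        le_trans hi.le (Finset.single_le_sum (fun j _ => Nat.zero_le _) (Finset.mem_univ i))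
      have : γ e ≤ cmax ^ N :=
        le_trans (hγdeg e) (pow_le_pow_of_le_one (by positivity) hcmax1.le h1)
      exact absurd (lt_of_le_of_lt (le_trans he this) hN) (lt_irrefl _)
    set D : Fin n →₀ ℕ := Finsupp.equivFunOnFinite.symm (fun _ => N) with hD
    have hDle : ∀ e : Fin n →₀ ℕ, γ e0 ≤ γ e → e ≤ D := by
      intro e he
      rw [Finsupp.le_def]
      intro i
      simpa [hD] using hdegbd e he i
    set T : Finset (Fin n →₀ ℕ) :=
      (Finset.Iic D).filter (fun e => MvPowerSeries.coeff e f' ≠ 0 ∧ γ e0 ≤ γ e) with hT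
    have hT0 : e0 ∈ T := by
      rw [hT, Finset.mem_filter, Finset.mem_Iic]
      exact ⟨hDle e0 le_rfl, he0, le_rfl⟩
    obtain ⟨estar, hestarT, hmax⟩ := T.exists_max_image γ ⟨e0, hT0⟩
    rw [hT, Finset.mem_filter] at hestarT
    obtain ⟨-, hsne, hst⟩ := hestarT
    have hother : ∀ e, MvPowerSeries.coeff e f' ≠ 0 → e ≠ estar → γ e < γ estar := by
      intro e hce hne
      by_contra hge
      push_neg at hge
      have heT : e ∈ T := by
        rw [hT, Finset.mem_filter, Finset.mem_Iic]
        exact ⟨hDle e (le_trans hst hge), hce, le_trans hst hge⟩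
      exact hne (hinj e estar (le_antisymm (hmax e heT) hge))
    obtain ⟨M', hM'⟩ : ∃ M' : ℕ, cmax ^ M' < γ estar :=
      exists_pow_lt_of_lt_one (hγpos estar) hcmax1
    set M : ℕ := M' + ∑ i, estar i with hM
    set U : Finset (Fin n →₀ ℕ) := Finset.Iic (Finsupp.equivFunOnFinite.symm (fun _ => M))
      with hU
    have hmemU : ∀ e : Fin n →₀ ℕ, (∑ i, e i) ≤ M → e ∈ U := by
      intro e he
      rw [hU, Finset.mem_Iic, Finsupp.le_def]
      intro i
      simp only [Finsupp.equivFunOnFinite_symm_apply_apply]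
      exact le_trans (Finset.single_le_sum (fun j _ => Nat.zero_le _) (Finset.mem_univ i)) he
    have hUstar : estar ∈ U := hmemU estar (by omega)
    set P : MvPowerSeries (Fin n) k :=
      ∑ e ∈ U, MvPowerSeries.monomial e (MvPowerSeries.coeff e f') with hP
    have htail : v (f' - P) ≤ cmax ^ (M + 1) := by
      apply tail_bound
      intro m hm
      have hmU : m ∈ U := hmemU m (by omega)
      rw [map_sub, hP, map_sum]
      rw [Finset.sum_eq_single m]
      · rw [MvPowerSeries.coeff_monomial, if_pos rfl, sub_self]
      · intro e _ hne
        rw [MvPowerSeries.coeff_monomial, if_neg (Ne.symm hne)]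
      · intro hnot; exact absurd hmU hnot
    have hcmaxM : cmax ^ (M + 1) < γ estar :=
      lt_of_le_of_lt (pow_le_pow_of_le_one (by positivity) hcmax1.le (by omega)) hM'
    have hrest : v (f' - MvPowerSeries.monomial estar (MvPowerSeries.coeff estar f'))
        < γ estar := by
      have hsplit : f' - MvPowerSeries.monomial estar (MvPowerSeries.coeff estar f')
          = (f' - P) + ∑ e ∈ U.erase estar,
              MvPowerSeries.monomial e (MvPowerSeries.coeff e f') := by
        have hPsum : P = MvPowerSeries.monomial estar (MvPowerSeries.coeff estar f')
            + ∑ e ∈ U.erase estar, MvPowerSeries.monomial e (MvPowerSeries.coeff e f') :=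
          (Finset.add_sum_erase _ _ hUstar).symm
        rw [hPsum]; ring
      rw [hsplit]
      apply v.map_add_lt (lt_of_le_of_lt htail hcmaxM)
      apply v.map_sum_lt (hγpos estar).ne'
      intro e he
      rcases eq_or_ne (MvPowerSeries.coeff e f') 0 with h0 | h0
      · rw [h0, map_zero, map_zero]
        exact hγpos estar
      · rw [hvmono e _ h0]
        exact hother e h0 (Finset.ne_of_mem_erase he)
    refine ⟨estar, hsne, ?_, hrest⟩
    have heq : f' = MvPowerSeries.monomial estar (MvPowerSeries.coeff estar f')
        + (f' - MvPowerSeries.monomial estar (MvPowerSeries.coeff estar f')) := by ring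
    rw [heq, v.map_add_eq_of_lt_left, hvmono _ _ hsne]
    rw [hvmono _ _ hsne]
    exact hrest
  -- main argument
  obtain ⟨e, ha, hvf, hfr⟩ := lead f hf
  obtain ⟨e', hb, hvg, hgr⟩ := lead g hg
  have hee : e = e' := hinj e e' (by rw [← hvf, ← hvg, hfg])
  subst hee
  set a := MvPowerSeries.coeff e f with hA
  set b := MvPowerSeries.coeff e g with hB
  refine ⟨a * b⁻¹, mul_ne_zero ha (inv_ne_zero hb), Or.inr ?_⟩
  have hCm : MvPowerSeries.C (σ := Fin n) (R := k) (a * b⁻¹) * MvPowerSeries.monomial e b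
      = MvPowerSeries.monomial e a := by
    rw [show (MvPowerSeries.C (σ := Fin n) (R := k) (a * b⁻¹) : MvPowerSeries (Fin n) k)
        = MvPowerSeries.monomial 0 (a * b⁻¹) from rfl,
      MvPowerSeries.monomial_mul_monomial, zero_add]
    congr 1
    field_simp
  have hsplit : f - MvPowerSeries.C (σ := Fin n) (R := k) (a * b⁻¹) * g
      = (f - MvPowerSeries.monomial e a)
        - MvPowerSeries.C (σ := Fin n) (R := k) (a * b⁻¹) * (g - MvPowerSeries.monomial e b) := by
    rw [mul_sub, hCm]; ring
  rw [hsplit, hvf]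
  have h2 : v (MvPowerSeries.C (σ := Fin n) (R := k) (a * b⁻¹)
      * (g - MvPowerSeries.monomial e b)) < γ e := by
    rw [map_mul, hC _ (mul_ne_zero ha (inv_ne_zero hb)), one_mul]
    exact hgr
  rw [sub_eq_add_neg]
  apply v.map_add_lt hfr
  rw [v.map_neg]
  exact h2
end

section
/- Let k be a field, n ≥ 1, and let c_1, …, c_n be multiplicatively rationally independent elements of ℝ≥0 with 0 < c_i < 1 for all i. Then there exists a valuation v on the fraction field of the formal power series ring k[[x_1, …, x_n]] with values in ℝ≥0 such that for every nonzero f ∈ k[[x_1, …, x_n]], v(f) equals the supremum over the exponent vectors α in the support of f of ∏_i c_i^{α_i} (and this supremum is attained); in particular v(x_i) = c_i, v is trivial on k, and v(f) ≤ 1 for all f ∈ k[[x_1, …, x_n]]. -/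
section W
variable {n : ℕ} (c : Fin n → NNReal)

noncomputable def wfun (α : Fin n →₀ ℕ) : NNReal := ∏ i, c i ^ α i

lemma wfun_le_one (hlt : ∀ i, c i ≤ 1) (α : Fin n →₀ ℕ) : wfun c α ≤ 1 :=
  Finset.prod_le_one (fun _ _ => zero_le) (fun i _ => pow_le_one₀ (zero_le) (hlt i))

lemma wfun_pos (hpos : ∀ i, 0 < c i) (α : Fin n →₀ ℕ) : 0 < wfun c α :=
  Finset.prod_pos (fun i _ => pow_pos (hpos i) _)

lemma wfun_add (α β : Fin n →₀ ℕ) : wfun c (α + β) = wfun c α * wfun c β := by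
  simp [wfun, pow_add, Finset.prod_mul_distrib]

lemma wfun_le_single (hlt : ∀ i, c i ≤ 1) (α : Fin n →₀ ℕ) (i : Fin n) :
    wfun c α ≤ c i ^ α i := by
  rw [wfun, ← Finset.prod_erase_mul _ _ (Finset.mem_univ i)]
  exact mul_le_of_le_one_left (zero_le)
    (Finset.prod_le_one (fun _ _ => zero_le) (fun j _ => pow_le_one₀ (zero_le) (hlt j)))

lemma wfun_inj (hpos : ∀ i, 0 < c i) (hind : ∀ m : Fin n → ℤ, ∏ i, c i ^ m i = 1 → m = 0)
    {α β : Fin n →₀ ℕ} (h : wfun c α = wfun c β) : α = β := by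
  have hne : ∀ i, c i ≠ 0 := fun i => (hpos i).ne'
  have key : ∏ i, c i ^ ((α i : ℤ) - (β i : ℤ)) = 1 := by
    have : ∏ i, c i ^ ((α i : ℤ) - (β i : ℤ)) = wfun c α / wfun c β := by
      rw [wfun, wfun, ← Finset.prod_div_distrib]
      refine Finset.prod_congr rfl (fun i _ => ?_)
      rw [zpow_sub₀ (hne i), zpow_natCast, zpow_natCast]
    rw [this, h, div_self (wfun_pos c hpos β).ne']
  have := hind _ key
  ext i
  have h2 : (α i : ℤ) - (β i : ℤ) = 0 := by simpa using congrFun this i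
  omega
end W

section Att
variable {k : Type*} [Field k] {n : ℕ} (c : Fin n → NNReal)

open MvPowerSeries

lemma exists_max (hpos : ∀ i, 0 < c i) (hlt : ∀ i, c i < 1)
    {f : MvPowerSeries (Fin n) k} (hf : f ≠ 0) :
    ∃ α, coeff α f ≠ 0 ∧ ∀ β, coeff β f ≠ 0 → wfun c β ≤ wfun c α := by
  classical
  obtain ⟨α₀, hα₀⟩ : ∃ α₀, coeff α₀ f ≠ 0 := by
    by_contra h
    push_neg at h
    exact hf (MvPowerSeries.ext fun α => by simpa using h α)
  set ε := wfun c α₀ with hε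
  have hεpos : 0 < ε := wfun_pos c hpos α₀
  have hN : ∀ i : Fin n, ∃ m : ℕ, c i ^ m < ε := fun i =>
    exists_pow_lt_of_lt_one hεpos (hlt i)
  choose N hNlt using hN
  set Nf : Fin n →₀ ℕ := Finsupp.equivFunOnFinite.symm N with hNf
  have hNfa : ∀ i, Nf i = N i := fun i => rfl
  -- any β with wfun c β ≥ ε lies below Nf
  have hbound : ∀ β : Fin n →₀ ℕ, ε ≤ wfun c β → β ≤ Nf := by
    intro β hβ i
    rw [hNfa]
    by_contra hgt
    push_neg at hgt
    have h1 : c i ^ β i ≤ c i ^ N i :=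
      pow_le_pow_right_of_le_one' (hlt i).le hgt.le
    have h2 : wfun c β ≤ c i ^ β i := wfun_le_single c (fun j => (hlt j).le) β i
    exact absurd (hβ.trans (h2.trans h1)) (not_le.mpr (hNlt i))
  set T : Finset (Fin n →₀ ℕ) := (Finset.Iic Nf).filter (fun α => coeff α f ≠ 0) with hT
  have hα₀T : α₀ ∈ T := by
    rw [hT, Finset.mem_filter]
    exact ⟨Finset.mem_Iic.mpr (hbound α₀ le_rfl), hα₀⟩
  obtain ⟨α, hαT, hαmax⟩ := T.exists_max_image (wfun c) ⟨α₀, hα₀T⟩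
  rw [hT, Finset.mem_filter] at hαT
  refine ⟨α, hαT.2, fun β hβ => ?_⟩
  by_cases hc : ε ≤ wfun c β
  · exact hαmax β (by rw [hT, Finset.mem_filter]; exact ⟨Finset.mem_Iic.mpr (hbound β hc), hβ⟩)
  · exact (not_le.mp hc).le.trans (hαmax α₀ hα₀T)
end Att

section Val
variable {k : Type*} [Field k] {n : ℕ} (c : Fin n → NNReal)
open MvPowerSeries

noncomputable def vzero (f : MvPowerSeries (Fin n) k) : NNReal :=
  sSup (wfun c '' {α | coeff α f ≠ 0})

variable (hpos : ∀ i, 0 < c i) (hlt : ∀ i, c i < 1)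
  (hind : ∀ m : Fin n → ℤ, ∏ i, c i ^ m i = 1 → m = 0)

lemma vzero_eq {f : MvPowerSeries (Fin n) k} {α : Fin n →₀ ℕ}
    (hα : coeff α f ≠ 0) (hmax : ∀ β, coeff β f ≠ 0 → wfun c β ≤ wfun c α) :
    vzero c f = wfun c α :=
  IsGreatest.csSup_eq ⟨⟨α, hα, rfl⟩, by rintro x ⟨β, hβ, rfl⟩; exact hmax β hβ⟩

include hpos hlt in
lemma vzero_isGreatest {f : MvPowerSeries (Fin n) k} (hf : f ≠ 0) :
    ∃ α, coeff α f ≠ 0 ∧ vzero c f = wfun c α ∧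
      ∀ β, coeff β f ≠ 0 → wfun c β ≤ wfun c α := by
  obtain ⟨α, hα, hmax⟩ := exists_max c hpos hlt hf
  exact ⟨α, hα, vzero_eq c hα hmax, hmax⟩

lemma vzero_zero : vzero c (0 : MvPowerSeries (Fin n) k) = 0 := by
  have : {α : Fin n →₀ ℕ | coeff α (0 : MvPowerSeries (Fin n) k) ≠ 0} = ∅ := by
    simp
  rw [vzero, this]; simp

include hlt in
lemma vzero_le_one (f : MvPowerSeries (Fin n) k) : vzero c f ≤ 1 :=
  csSup_le' (by rintro x ⟨β, _, rfl⟩; exact wfun_le_one c (fun i => (hlt i).le) β)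

include hlt in
lemma le_vzero {f : MvPowerSeries (Fin n) k} {β : Fin n →₀ ℕ} (hβ : coeff β f ≠ 0) :
    wfun c β ≤ vzero c f :=
  le_csSup ⟨1, by rintro x ⟨γ, _, rfl⟩; exact wfun_le_one c (fun i => (hlt i).le) γ⟩ ⟨β, hβ, rfl⟩

lemma vzero_one : vzero c (1 : MvPowerSeries (Fin n) k) = 1 := by
  have h0 : coeff (0 : Fin n →₀ ℕ) (1 : MvPowerSeries (Fin n) k) ≠ 0 := by simp
  have := vzero_eq c h0 (fun β hβ => by
    rcases eq_or_ne β 0 with rfl | hne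
    · exact le_rfl
    · exact absurd hβ (by simp [MvPowerSeries.coeff_one, hne]))
  rw [this]; simp [wfun]

include hpos hlt hind in
lemma vzero_mul (f g : MvPowerSeries (Fin n) k) :
    vzero c (f * g) = vzero c f * vzero c g := by
  classical
  rcases eq_or_ne f 0 with rfl | hf
  · simp [vzero_zero]
  rcases eq_or_ne g 0 with rfl | hg
  · simp [vzero_zero]
  obtain ⟨α, hα, hvf, hmaxf⟩ := vzero_isGreatest c hpos hlt hf
  obtain ⟨β, hβ, hvg, hmaxg⟩ := vzero_isGreatest c hpos hlt hg
  -- the coefficient of f*g at α+β is coeff α f * coeff β g ≠ 0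
  have hcoeff : coeff (α + β) (f * g) = coeff α f * coeff β g := by
    rw [MvPowerSeries.coeff_mul]
    refine Finset.sum_eq_single (α, β) ?_ ?_
    · rintro ⟨p, q⟩ hpq hne
      rw [Finset.HasAntidiagonal.mem_antidiagonal] at hpq
      by_contra hterm
      have hp : coeff p f ≠ 0 := fun h => hterm (by simp [h])
      have hq : coeff q g ≠ 0 := fun h => hterm (by simp [h])
      have h1 : wfun c p ≤ wfun c α := hmaxf p hp
      have h2 : wfun c q ≤ wfun c β := hmaxg q hq
      have heq : wfun c p * wfun c q = wfun c α * wfun c β := by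
        rw [← wfun_add, ← wfun_add, hpq]
      have hpe : wfun c p = wfun c α := by
        rcases h1.lt_or_eq with h1' | h1'
        · exact absurd heq (ne_of_lt ((mul_le_mul_right h2 _).trans_lt
            (mul_lt_mul_of_pos_right h1' (wfun_pos c hpos β))))
        · exact h1'
      have hqe : wfun c q = wfun c β := by
        have := heq
        rw [hpe] at this
        exact mul_left_cancel₀ (wfun_pos c hpos α).ne' this
      apply hne
      have e1 : p = α := wfun_inj c hpos hind hpe
      have e2 : q = β := wfun_inj c hpos hind hqe
      rw [e1, e2]
    · intro h
      rw [Finset.HasAntidiagonal.mem_antidiagonal] at h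
      exact absurd rfl h
  have hne : coeff (α + β) (f * g) ≠ 0 := by
    rw [hcoeff]; exact mul_ne_zero hα hβ
  obtain ⟨γ, hγ, hv, hmax⟩ := vzero_isGreatest c hpos hlt
    (show f * g ≠ 0 from fun h => hne (by simp [h]))
  -- v(fg) ≥ w(α+β)
  have hge : wfun c α * wfun c β ≤ wfun c γ := by
    rw [← wfun_add]; exact hmax _ hne
  -- v(fg) ≤ v f * v g
  have hle : wfun c γ ≤ wfun c α * wfun c β := by
    have := hγ
    rw [MvPowerSeries.coeff_mul] at this
    obtain ⟨⟨p, q⟩, hpq, hterm⟩ := Finset.exists_ne_zero_of_sum_ne_zero this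
    rw [Finset.HasAntidiagonal.mem_antidiagonal] at hpq
    have hp : coeff p f ≠ 0 := fun h => hterm (by simp [h])
    have hq : coeff q g ≠ 0 := fun h => hterm (by simp [h])
    calc wfun c γ = wfun c p * wfun c q := by rw [← wfun_add, hpq]
    _ ≤ wfun c α * wfun c β := mul_le_mul' (hmaxf p hp) (hmaxg q hq)
  rw [hv, hvf, hvg, le_antisymm hle hge]

include hlt in
lemma vzero_add_le (f g : MvPowerSeries (Fin n) k) :
    vzero c (f + g) ≤ max (vzero c f) (vzero c g) := by
  refine csSup_le' ?_
  rintro x ⟨β, hβ, rfl⟩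
  simp only [Set.mem_setOf_eq, map_add] at hβ
  rcases eq_or_ne (coeff β f) 0 with h1 | h1
  · exact le_max_of_le_right (le_vzero c hlt (by rw [h1, zero_add] at hβ; exact hβ))
  · exact le_max_of_le_left (le_vzero c hlt h1)

noncomputable def valR : Valuation (MvPowerSeries (Fin n) k) NNReal where
  toFun := vzero c
  map_zero' := vzero_zero c
  map_one' := vzero_one c
  map_mul' := vzero_mul c hpos hlt hind
  map_add_le_max' := vzero_add_le c hlt

end Val

section Final
variable {k : Type*} [Field k] {n : ℕ} (c : Fin n → NNReal)
open MvPowerSeries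

lemma valR_ne_zero (hpos : ∀ i, 0 < c i) (hlt : ∀ i, c i < 1)
    {f : MvPowerSeries (Fin n) k} (hf : f ≠ 0) : vzero c f ≠ 0 := by
  obtain ⟨α, hα, hv, _⟩ := vzero_isGreatest c hpos hlt hf
  rw [hv]
  exact (wfun_pos c hpos α).ne'

theorem stmt_11' (hn : 1 ≤ n)
    (hpos : ∀ i, 0 < c i) (hlt : ∀ i, c i < 1)
    (hind : ∀ m : Fin n → ℤ, ∏ i, c i ^ m i = 1 → m = 0) :
    ∃ v : Valuation (FractionRing (MvPowerSeries (Fin n) k)) NNReal,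
      (∀ f : MvPowerSeries (Fin n) k, f ≠ 0 →
        (∃ α : Fin n →₀ ℕ, MvPowerSeries.coeff α f ≠ 0 ∧
          v (algebraMap (MvPowerSeries (Fin n) k) (FractionRing (MvPowerSeries (Fin n) k)) f) =
            ∏ i, c i ^ α i) ∧
        (∀ α : Fin n →₀ ℕ, MvPowerSeries.coeff α f ≠ 0 →
          ∏ i, c i ^ α i ≤
            v (algebraMap (MvPowerSeries (Fin n) k)
              (FractionRing (MvPowerSeries (Fin n) k)) f))) ∧
      (∀ i : Fin n,
        v (algebraMap (MvPowerSeries (Fin n) k) (FractionRing (MvPowerSeries (Fin n) k))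
          (MvPowerSeries.X i)) = c i) ∧
      (∀ a : k, a ≠ 0 →
        v (algebraMap (MvPowerSeries (Fin n) k) (FractionRing (MvPowerSeries (Fin n) k))
          ((MvPowerSeries.C a : MvPowerSeries (Fin n) k))) = 1) ∧
      (∀ f : MvPowerSeries (Fin n) k,
        v (algebraMap (MvPowerSeries (Fin n) k)
          (FractionRing (MvPowerSeries (Fin n) k)) f) ≤ 1) := by
  classical
  set R := MvPowerSeries (Fin n) k
  set w : Valuation R NNReal := valR c hpos hlt hind with hw
  have hS : nonZeroDivisors R ≤ w.supp.primeCompl := by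
    intro x hx
    have hx0 : x ≠ 0 := nonZeroDivisors.ne_zero hx
    intro hmem
    have : w x = 0 := (Valuation.mem_supp_iff w x).mp hmem
    exact valR_ne_zero c hpos hlt hx0 this
  refine ⟨w.extendToLocalization hS (FractionRing R), ?_, ?_, ?_, ?_⟩
  · intro f hf
    rw [Valuation.extendToLocalization_apply_map_apply]
    obtain ⟨α, hα, hv, hmax⟩ := vzero_isGreatest c hpos hlt hf
    exact ⟨⟨α, hα, hv⟩, fun β hβ => le_vzero c hlt hβ⟩
  · intro i
    rw [Valuation.extendToLocalization_apply_map_apply]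
    show vzero c (X i : R) = c i
    have hα : coeff (Finsupp.single i 1) (X i : R) ≠ 0 := by
      simp [MvPowerSeries.coeff_X]
    have hmax : ∀ β, coeff β (X i : R) ≠ 0 → wfun c β ≤ wfun c (Finsupp.single i 1) := by
      intro β hβ
      rcases eq_or_ne β (Finsupp.single i 1) with rfl | hne
      · exact le_rfl
      · exact absurd hβ (by simp [MvPowerSeries.coeff_X, hne])
    rw [vzero_eq c hα hmax, wfun]
    rw [Finset.prod_eq_single i (fun j _ hj => by simp [Finsupp.single_apply, Ne.symm hj])
      (fun h => absurd (Finset.mem_univ i) h)]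
    simp
  · intro a ha
    rw [Valuation.extendToLocalization_apply_map_apply]
    show vzero c ((MvPowerSeries.C a : MvPowerSeries (Fin n) k)) = 1
    have hα : coeff (0 : Fin n →₀ ℕ) ((MvPowerSeries.C a : MvPowerSeries (Fin n) k)) ≠ 0 := by
      simpa using ha
    have hmax : ∀ β, coeff β ((MvPowerSeries.C a : MvPowerSeries (Fin n) k)) ≠ 0 →
        wfun c β ≤ wfun c 0 := by
      intro β hβ
      rcases eq_or_ne β 0 with rfl | hne
      · exact le_rfl
      · exact absurd hβ (by simp [MvPowerSeries.coeff_C, hne])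
    rw [vzero_eq c hα hmax]
    simp [wfun]
  · intro f
    rw [Valuation.extendToLocalization_apply_map_apply]
    exact vzero_le_one c hlt f
end Final



/-- Existence of the monomial valuation: given `0 < cᵢ < 1` in `ℝ≥0` multiplicatively
rationally independent, there is a valuation on the fraction field of `k[[x₁,…,xₙ]]`
whose value on every nonzero power series is the (attained) supremum of `∏ᵢ cᵢ^{αᵢ}` over
the support; in particular `v(xᵢ) = cᵢ`, `v` is trivial on `k`, and `v ≤ 1` on power
series. -/
theorem stmt_11 (k : Type*) [Field k] (n : ℕ) (hn : 1 ≤ n)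
    (c : Fin n → NNReal) (hpos : ∀ i, 0 < c i) (hlt : ∀ i, c i < 1)
    (hind : ∀ m : Fin n → ℤ, ∏ i, c i ^ m i = 1 → m = 0) :
    ∃ v : Valuation (FractionRing (MvPowerSeries (Fin n) k)) NNReal,
      (∀ f : MvPowerSeries (Fin n) k, f ≠ 0 →
        (∃ α : Fin n →₀ ℕ, MvPowerSeries.coeff α f ≠ 0 ∧
          v (algebraMap (MvPowerSeries (Fin n) k) (FractionRing (MvPowerSeries (Fin n) k)) f) =
            ∏ i, c i ^ α i) ∧
        (∀ α : Fin n →₀ ℕ, MvPowerSeries.coeff α f ≠ 0 →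
          ∏ i, c i ^ α i ≤
            v (algebraMap (MvPowerSeries (Fin n) k)
              (FractionRing (MvPowerSeries (Fin n) k)) f))) ∧
      (∀ i : Fin n,
        v (algebraMap (MvPowerSeries (Fin n) k) (FractionRing (MvPowerSeries (Fin n) k))
          (MvPowerSeries.X i)) = c i) ∧
      (∀ a : k, a ≠ 0 →
        v (algebraMap (MvPowerSeries (Fin n) k) (FractionRing (MvPowerSeries (Fin n) k))
          (MvPowerSeries.C a : MvPowerSeries (Fin n) k)) = 1) ∧
      (∀ f : MvPowerSeries (Fin n) k,
        v (algebraMap (MvPowerSeries (Fin n) k)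
          (FractionRing (MvPowerSeries (Fin n) k)) f) ≤ 1) := by
  exact stmt_11' c hn hpos hlt hind
end

section
/- Let t, n̄_R, ω_R, n̄_S, ω_S be positive integers and a_R, b_R, a_S, b_S be natural numbers satisfying: n̄_R·b_R − ω_R·a_R = 1, n̄_S·b_S − ω_S·a_S = 1, ω_S·n̄_R = t·ω_R·n̄_S, and n̄_S·t·b_R − ω_S·a_R = t. Then b_S·n̄_R − a_S·t·ω_R = 1, n̄_S = n̄_R, and ω_S = t·ω_R. -/
/-- The matrix computation of Section 4 of the paper (equations (10)–(12)): from the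
determinant identities `n̄_R·b_R − ω_R·a_R = 1`, `n̄_S·b_S − ω_S·a_S = 1`, the
triangularity condition `ω_S·n̄_R = t·ω_R·n̄_S`, and the stability condition
`n̄_S·t·b_R − ω_S·a_R = t`, one deduces `b_S·n̄_R − a_S·t·ω_R = 1`, `n̄_S = n̄_R` and
`ω_S = t·ω_R`. -/
theorem stmt_12 (t nR wR nS wS aR bR aS bS : ℤ)
    (ht : 0 < t) (hnR : 0 < nR) (hwR : 0 < wR) (hnS : 0 < nS) (hwS : 0 < wS)
    (haR : 0 ≤ aR) (hbR : 0 ≤ bR) (haS : 0 ≤ aS) (hbS : 0 ≤ bS)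
    (h1 : nR * bR - wR * aR = 1)
    (h2 : nS * bS - wS * aS = 1)
    (h3 : wS * nR = t * wR * nS)
    (h4 : nS * t * bR - wS * aR = t) :
    bS * nR - aS * t * wR = 1 ∧ nS = nR ∧ wS = t * wR := by
  have hns : nR = nS := by
    have key : nR * t = nS * t := by linear_combination t * nS * h1 - nR * h4 - aR * h3
    exact mul_right_cancel₀ (ne_of_gt ht) key
  subst hns
  have hw : wS = t * wR := mul_right_cancel₀ (ne_of_gt hnR) h3
  subst hw
  exact ⟨by linear_combination h2, rfl, rfl⟩
end
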